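/- Let G be a connected graph with at least two vertices and let n ≥ 3 be an integer. If G is maximally restricted edge-connected (λ′-optimal), i.e., λ′(G) = ξ(G), then the direct product G × T_n is super restricted edge-connected. -/

import Mathlib

open SimpleGraph

/-- The direct (tensor/Kronecker) product of two simple graphs:
`(u₁, v₁)` and `(u₂, v₂)` are adjacent iff `u₁u₂ ∈ E(G)` and `v₁v₂ ∈ E(H)`. -/
def tensorProd {α β : Type*} (G : SimpleGraph α) (H : SimpleGraph β) :
    SimpleGraph (α × β) where
  Adj x y := G.Adj x.1 y.1 ∧ H.Adj x.2 y.2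
  symm := ⟨fun _ _ h => ⟨h.1.symm, h.2.symm⟩⟩
  loopless := ⟨fun _ h => G.loopless.irrefl _ h.1⟩

/-- The direct product `G × Tₙ` of a simple graph `G` with the total graph `Tₙ`
(the complete graph `Kₙ` with a loop added at every vertex):  since `Tₙ` has all
possible edges and loops, `(u₁, v₁)` is adjacent to `(u₂, v₂)` iff `u₁u₂ ∈ E(G)`. -/
def totalProd {α : Type*} (G : SimpleGraph α) (n : ℕ) :
    SimpleGraph (α × Fin n) where
  Adj x y := G.Adj x.1 y.1
  symm := ⟨fun _ _ h => h.symm⟩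
  loopless := ⟨fun _ h => G.loopless.irrefl _ h⟩

/-- The direct product `K₂ × Kₙ`. -/
def K2timesKn (n : ℕ) : SimpleGraph (Fin 2 × Fin n) :=
  tensorProd (completeGraph (Fin 2)) (completeGraph (Fin n))

/-- The direct product `K₂ × Tₙ` (isomorphic to the complete bipartite graph `K_{n,n}`). -/
def K2timesTn (n : ℕ) : SimpleGraph (Fin 2 × Fin n) :=
  totalProd (completeGraph (Fin 2)) n

/-- `[A, V ∖ A]` : the set of edges of `G` with exactly one endpoint in `A`. -/
def cutEdges {α : Type*} (G : SimpleGraph α) (A : Set α) : Set (Sym2 α) :=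
  {e | e ∈ G.edgeSet ∧ ∃ u v, e = s(u, v) ∧ u ∈ A ∧ v ∉ A}

/-- `F` is an edge-cut of `G`: a set of edges whose deletion disconnects `G`. -/
def IsEdgeCut {α : Type*} (G : SimpleGraph α) (F : Set (Sym2 α)) : Prop :=
  F ⊆ G.edgeSet ∧ ¬ (G.deleteEdges F).Connected

/-- The edge-connectivity `λ(G)`: the minimum cardinality of an edge-cut. -/
noncomputable def edgeConn {α : Type*} (G : SimpleGraph α) : ℕ :=
  sInf {k | ∃ F : Finset (Sym2 α), IsEdgeCut G ↑F ∧ F.card = k}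

/-- `G` is super edge-connected (super-λ): every minimum edge-cut is exactly the
set of edges incident with some vertex. -/
def SuperEdgeConnected {α : Type*} (G : SimpleGraph α) : Prop :=
  ∀ F : Finset (Sym2 α), IsEdgeCut G ↑F → F.card = edgeConn G →
    ∃ v, (F : Set (Sym2 α)) = G.incidenceSet v

/-- `F` is a restricted edge-cut of `G`: its deletion disconnects `G` and every
connected component of `G − F` has at least two vertices. -/
def IsRestrictedEdgeCut {α : Type*} (G : SimpleGraph α) (F : Set (Sym2 α)) : Prop :=
  F ⊆ G.edgeSet ∧ ¬ (G.deleteEdges F).Connected ∧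
    ∀ c : (G.deleteEdges F).ConnectedComponent, c.supp.Nontrivial

/-- The restricted edge-connectivity `λ'(G) : ℕ∞`: the minimum cardinality of a
restricted edge-cut, and `+∞` (`⊤`) if no restricted edge-cut exists. -/
noncomputable def restrictedEdgeConn {α : Type*} (G : SimpleGraph α) : ℕ∞ :=
  sInf {k : ℕ∞ | ∃ F : Finset (Sym2 α), IsRestrictedEdgeCut G ↑F ∧ (F.card : ℕ∞) = k}

/-- `G` is super restricted edge-connected (super-λ'): every minimum restricted
edge-cut isolates an edge, i.e. some component of `G − F` is a single edge. -/
def SuperRestrictedEdgeConnected {α : Type*} (G : SimpleGraph α) : Prop :=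
  ∀ F : Finset (Sym2 α), IsRestrictedEdgeCut G ↑F →
    (F.card : ℕ∞) = restrictedEdgeConn G →
    ∃ u v, (G.deleteEdges ↑F).Adj u v ∧
      ((G.deleteEdges ↑F).connectedComponentMk u).supp = {u, v}

/-- The minimum edge-degree `ξ(G) = min { d(u) + d(v) − 2 : uv ∈ E(G) }`. -/
noncomputable def minEdgeDegree {α : Type*} (G : SimpleGraph α) : ℕ :=
  sInf {k | ∃ u v, G.Adj u v ∧ (G.neighborSet u).ncard + (G.neighborSet v).ncard - 2 = k}


section helpers
variable {α : Type*}

lemma walk_closed (G' : SimpleGraph α) (S : Set α)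
    (hS : ∀ a ∈ S, ∀ b, G'.Adj a b → b ∈ S) {p q : α} (w : G'.Walk p q) (hp : p ∈ S) :
    q ∈ S := by
  induction w with
  | nil => exact hp
  | cons h w ih => exact ih (hS _ hp _ h)

lemma reach_closed (G' : SimpleGraph α) (S : Set α)
    (hS : ∀ a ∈ S, ∀ b, G'.Adj a b → b ∈ S) {p q : α} (h : G'.Reachable p q) (hp : p ∈ S) :
    q ∈ S := by
  obtain ⟨w⟩ := h; exact walk_closed G' S hS w hp

lemma first_step {G' : SimpleGraph α} {p q : α} (h : G'.Reachable p q) (hne : p ≠ q) :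
    ∃ r, G'.Adj p r ∧ G'.Reachable r q := by
  obtain ⟨w⟩ := h
  cases w with
  | nil => exact absurd rfl hne
  | cons h w => exact ⟨_, h, ⟨w⟩⟩

/-- a vertex of a nontrivial component has a neighbor (in the same component). -/
lemma exists_adj_of_nontrivial {G' : SimpleGraph α} {p : α}
    (h : (G'.connectedComponentMk p).supp.Nontrivial) : ∃ r, G'.Adj p r := by
  obtain ⟨q, hq, hqp⟩ := h.exists_ne p
  rw [ConnectedComponent.mem_supp_iff] at hq
  obtain ⟨r, hr, -⟩ := first_step ((ConnectedComponent.eq).mp hq).symm (Ne.symm hqp)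
  exact ⟨r, hr⟩

lemma adj_of_supp_pair {G' : SimpleGraph α} {p q : α}
    (hq : q ∈ (G'.connectedComponentMk p).supp)
    (hsub : (G'.connectedComponentMk p).supp ⊆ {p, q}) (hne : p ≠ q) : G'.Adj p q := by
  rw [ConnectedComponent.mem_supp_iff] at hq
  obtain ⟨r, hr, -⟩ := first_step ((ConnectedComponent.eq).mp hq).symm hne
  have hrs : r ∈ (G'.connectedComponentMk p).supp := by
    rw [ConnectedComponent.mem_supp_iff, ConnectedComponent.eq]
    exact ⟨(SimpleGraph.Walk.cons hr SimpleGraph.Walk.nil).reverse⟩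
  rcases hsub hrs with h | h
  · exact absurd h hr.ne'
  · exact h ▸ hr

lemma closed_univ (G' : SimpleGraph α) (hc : G'.Connected) (S : Set α)
    (hS : ∀ a ∈ S, ∀ b, G'.Adj a b → b ∈ S) {p : α} (hp : p ∈ S) (q : α) : q ∈ S :=
  reach_closed G' S hS (hc p q) hp

lemma sum_all_eq {β : Type*} {s : Finset β} {f : β → ℕ} {m : ℕ}
    (hb : ∀ i ∈ s, m ≤ f i) (he : ∑ i ∈ s, f i ≤ s.card * m) : ∀ i ∈ s, f i = m := by
  by_contra hc
  push_neg at hc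
  obtain ⟨i₀, hi₀, hne⟩ := hc
  have : ∑ i ∈ s, (fun _ => m) i < ∑ i ∈ s, f i :=
    Finset.sum_lt_sum hb ⟨i₀, hi₀, lt_of_le_of_ne (hb _ hi₀) (Ne.symm hne)⟩
  rw [Finset.sum_const, smul_eq_mul] at this
  omega

end helpers

section arith
variable {n : ℕ} (hn : 3 ≤ n)

/-- the two–orientation contribution of one `G`-edge. -/
def fpair (n a b : ℕ) : ℕ := a * (n - b) + b * (n - a)

lemma fge_n {a b : ℕ} (ha1 : 1 ≤ a) (ha2 : a ≤ n - 1) (hb : b ≤ n) : n ≤ fpair n a b := by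
  have h1 : (n - b) * 1 ≤ (n - b) * a := Nat.mul_le_mul_left _ ha1
  have h2 : b * 1 ≤ b * (n - a) := Nat.mul_le_mul_left _ (by omega)
  unfold fpair
  have : a * (n - b) = (n - b) * a := Nat.mul_comm _ _
  omega

lemma feq_n {a b : ℕ} (hn : 3 ≤ n) (ha1 : 1 ≤ a) (ha2 : a ≤ n - 1) (hb : b ≤ n)
    (he : fpair n a b = n) : (a = 1 ∧ b = 0) ∨ (a = n - 1 ∧ b = n) := by
  have h1 : (n - b) * 1 ≤ (n - b) * a := Nat.mul_le_mul_left _ ha1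
  have h2 : b * 1 ≤ b * (n - a) := Nat.mul_le_mul_left _ (by omega)
  unfold fpair at he
  have hc : a * (n - b) = (n - b) * a := Nat.mul_comm _ _
  have e1 : (n - b) * a = (n - b) * 1 := by omega
  have e2 : b * (n - a) = b * 1 := by omega
  rcases Nat.eq_zero_or_pos (n - b) with h | h
  · rcases Nat.eq_zero_or_pos b with h' | h'
    · omega
    · have := Nat.eq_of_mul_eq_mul_left h' e2
      omega
  · have ha := Nat.eq_of_mul_eq_mul_left h e1
    rcases Nat.eq_zero_or_pos b with h' | h'
    · omega
    · have := Nat.eq_of_mul_eq_mul_left h' e2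
      omega

lemma fge_2n2 {a b : ℕ} (hn : 3 ≤ n) (ha1 : 1 ≤ a) (ha2 : a ≤ n - 1)
    (hb1 : 1 ≤ b) (hb2 : b ≤ n - 1) : 2 * n - 2 ≤ fpair n a b := by
  unfold fpair
  rcases Nat.lt_or_ge a 2 with h | h
  · -- a = 1
    have ha : a = 1 := by omega
    subst ha
    have hx : b * (n - 1) = b * (n - 2) + b := by
      have : n - 1 = (n - 2) + 1 := by omega
      rw [this, Nat.mul_add, Nat.mul_one]
    have : 1 * (n - 2) ≤ b * (n - 2) := Nat.mul_le_mul_right _ hb1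
    omega
  rcases Nat.lt_or_ge a (n - 1) with h' | h'
  · -- 2 ≤ a ≤ n - 2
    have h1 : 2 * (n - b) ≤ a * (n - b) := Nat.mul_le_mul_right _ h
    have h2 : b * 2 ≤ b * (n - a) := Nat.mul_le_mul_left _ (by omega)
    omega
  · -- a = n - 1
    have ha : a = n - 1 := by omega
    subst ha
    rcases Nat.lt_or_ge b (n - 1) with hb | hb
    · have h1 : (n - 1) * 2 ≤ (n - 1) * (n - b) := Nat.mul_le_mul_left _ (by omega)
      omega
    · have hb' : b = n - 1 := by omega
      subst hb'
      have : n - (n - 1) = 1 := by omega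
      rw [this]
      have : n - (n-1) = 1 := by omega
      have h1 : (n-1) * (n - (n-1)) = (n-1) * 1 := by rw [this]
      omega

lemma feq_2n2 {a b : ℕ} (hn : 3 ≤ n) (ha1 : 1 ≤ a) (ha2 : a ≤ n - 1)
    (hb1 : 1 ≤ b) (hb2 : b ≤ n - 1) (he : fpair n a b = 2 * n - 2) :
    (a = 1 ∧ b = 1) ∨ (a = n - 1 ∧ b = n - 1) := by
  unfold fpair at he
  rcases Nat.lt_or_ge a 2 with h | h
  · have ha : a = 1 := by omega
    subst ha
    left
    have hx : b * (n - 1) = b * (n - 2) + b := by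
      have : n - 1 = (n - 2) + 1 := by omega
      rw [this, Nat.mul_add, Nat.mul_one]
    have hy : 1 * (n - 2) ≤ b * (n - 2) := Nat.mul_le_mul_right _ hb1
    have hz : b * (n - 2) = 1 * (n - 2) := by omega
    have hb1' : b = 1 := Nat.eq_of_mul_eq_mul_right (m := n - 2) (by omega) hz
    omega
  rcases Nat.lt_or_ge a (n - 1) with h' | h'
  · exfalso
    have h1 : 2 * (n - b) ≤ a * (n - b) := Nat.mul_le_mul_right _ h
    have h2 : b * 2 ≤ b * (n - a) := Nat.mul_le_mul_left _ (by omega)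
    omega
  · have ha : a = n - 1 := by omega
    subst ha
    right
    have hone : n - (n - 1) = 1 := by omega
    rw [hone, Nat.mul_one] at he
    rcases Nat.lt_or_ge b (n - 1) with hb | hb
    · exfalso
      have h1 : (n - 1) * 2 ≤ (n - 1) * (n - b) := Nat.mul_le_mul_left _ (by omega)
      omega
    · omega

lemma fzero {a b : ℕ} (hn : 3 ≤ n) (ha : a ≤ n) (hb : b ≤ n)
    (he : a * (n - b) = 0) (he' : b * (n - a) = 0) :
    (a = 0 ∧ b = 0) ∨ (a = n ∧ b = n) := by
  rcases Nat.mul_eq_zero.mp he with h | h <;> rcases Nat.mul_eq_zero.mp he' with h' | h' <;> omega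

end arith

section gside
attribute [local instance] Classical.propDecidable
variable {V : Type*} [Fintype V] (G : SimpleGraph V)

lemma ncard_nbr (u : V) : (G.neighborSet u).ncard = G.degree u := by
  rw [SimpleGraph.degree, SimpleGraph.neighborFinset_def, Set.ncard_eq_toFinset_card']

lemma exists_adj_self (hG : G.Connected) (hV : 2 ≤ Fintype.card V) (v : V) :
    ∃ w, G.Adj v w := by
  obtain ⟨u, hu⟩ := Fintype.exists_ne_of_one_lt_card (by omega) v
  obtain ⟨r, hr, -⟩ := first_step (hG v u) (Ne.symm hu)
  exact ⟨r, hr⟩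

lemma xi_le {u v : V} (h : G.Adj u v) : minEdgeDegree G ≤ G.degree u + G.degree v - 2 :=
  Nat.sInf_le ⟨u, v, h, by rw [ncard_nbr, ncard_nbr]⟩

lemma xi_mem (hG : G.Connected) (hV : 2 ≤ Fintype.card V) :
    ∃ u v, G.Adj u v ∧ G.degree u + G.degree v - 2 = minEdgeDegree G := by
  have hne : Nonempty V := Fintype.card_pos_iff.mp (by omega)
  obtain ⟨v⟩ := hne
  obtain ⟨w, hw⟩ := exists_adj_self G hG hV v
  have hmem : minEdgeDegree G ∈
      {k | ∃ u v, G.Adj u v ∧ (G.neighborSet u).ncard + (G.neighborSet v).ncard - 2 = k} :=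
    Nat.sInf_mem ⟨_, v, w, hw, rfl⟩
  obtain ⟨a, b, hab, he⟩ := hmem
  exact ⟨a, b, hab, by rw [← ncard_nbr, ← ncard_nbr]; exact he⟩

lemma deg_pos {u v : V} (h : G.Adj u v) : 1 ≤ G.degree u := by
  have : v ∈ G.neighborFinset u := by simp [h]
  exact Finset.card_pos.mpr ⟨v, this⟩

/-- if `λ'(G)` is finite (equals `ξ(G)`), then `ξ(G) ≥ 1`. -/
lemma xi_pos (hG : G.Connected) (hV : 2 ≤ Fintype.card V)
    (hopt : restrictedEdgeConn G = (minEdgeDegree G : ℕ∞)) : 1 ≤ minEdgeDegree G := by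
  by_contra h
  have hxi : minEdgeDegree G = 0 := by omega
  obtain ⟨u, v, huv, hd⟩ := xi_mem G hG hV
  have hdu : G.degree u = 1 := by
    have h1 := deg_pos G huv
    have h2 := deg_pos G huv.symm
    omega
  have hdv : G.degree v = 1 := by
    have h1 := deg_pos G huv
    have h2 := deg_pos G huv.symm
    omega
  -- V = {u, v}
  have huniq : ∀ w, G.Adj u w → w = v := by
    intro w hw
    have h1 : w ∈ G.neighborFinset u := by simp [hw]
    have h2 : v ∈ G.neighborFinset u := by simp [huv]
    have := Finset.card_le_one.mp (le_of_eq hdu) w h1 v h2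
    exact this
  have huniq' : ∀ w, G.Adj v w → w = u := by
    intro w hw
    have h1 : w ∈ G.neighborFinset v := by simp [hw]
    have h2 : u ∈ G.neighborFinset v := by simp [huv.symm]
    exact Finset.card_le_one.mp (le_of_eq hdv) w h1 u h2
  have hall : ∀ w : V, w = u ∨ w = v := by
    intro w
    have : w ∈ ({u, v} : Set V) := by
      refine closed_univ G hG {u, v} ?_ (p := u) (by simp) w
      rintro a (rfl | rfl) b hb
      · exact Or.inr (huniq b hb)
      · exact Or.inl (huniq' b hb)
    simpa using this
  -- no restricted edge-cut exists
  have hempty : {k : ℕ∞ | ∃ F : Finset (Sym2 V), IsRestrictedEdgeCut G ↑F ∧ (F.card : ℕ∞) = k}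
      = ∅ := by
    rw [Set.eq_empty_iff_forall_notMem]
    rintro k ⟨F, ⟨hsub, hdisc, hcomp⟩, -⟩
    have hne' : Nonempty V := ⟨u⟩
    have hpre : ¬ (G.deleteEdges ↑F).Preconnected := fun hp => hdisc ⟨hp⟩
    rw [SimpleGraph.Preconnected] at hpre
    push_neg at hpre
    obtain ⟨p, q, hpq⟩ := hpre
    obtain ⟨r, hr, hrp⟩ :=
      (hcomp ((G.deleteEdges ↑F).connectedComponentMk p)).exists_ne p
    rw [ConnectedComponent.mem_supp_iff, ConnectedComponent.eq] at hr
    -- p ≠ r, both in {u,v}, so {p,r} = {u,v} ∋ q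
    have hq : q = p ∨ q = r := by
      rcases hall p with rfl | rfl <;> rcases hall r with h2 | h2 <;>
        rcases hall q with h3 | h3 <;> simp_all
    rcases hq with rfl | rfl
    · exact hpq (SimpleGraph.Reachable.refl _)
    · exact hpq hr.symm
  rw [restrictedEdgeConn, hempty, sInf_empty, hxi] at hopt
  simp at hopt

/-- A partition of `V` with all vertices having same-side neighbours gives a
restricted edge-cut; any orientation-choice finset of its cut pairs has size `≥ ξ`. -/
lemma cutbound (hopt : restrictedEdgeConn G = (minEdgeDegree G : ℕ∞))
    (B : Set V) (Pc : Finset (V × V))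
    (hBne : B.Nonempty) (hBcne : Bᶜ.Nonempty)
    (hBnb : ∀ v ∈ B, ∃ w ∈ B, G.Adj v w)
    (hBcnb : ∀ v ∈ Bᶜ, ∃ w ∈ Bᶜ, G.Adj v w)
    (hPc : ∀ p ∈ Pc, G.Adj p.1 p.2 ∧ ¬(p.1 ∈ B ↔ p.2 ∈ B))
    (hcover : ∀ u w, G.Adj u w → u ∈ B → w ∉ B → (u, w) ∈ Pc ∨ (w, u) ∈ Pc)
    (hanti : ∀ p ∈ Pc, (p.2, p.1) ∉ Pc) :
    minEdgeDegree G ≤ Pc.card := by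
  classical
  set FG : Finset (Sym2 V) := Pc.image (fun p => s(p.1, p.2)) with hFG
  have hcardFG : FG.card = Pc.card := by
    rw [hFG]
    apply Finset.card_image_of_injOn
    intro p hp q hq he
    rcases Sym2.eq_iff.mp he with ⟨h1, h2⟩ | ⟨h1, h2⟩
    · exact Prod.ext h1 h2
    · exfalso
      have : (q.2, q.1) = p := by rw [← h1, ← h2]
      exact hanti q hq (this ▸ hp)
  have hmemFG : ∀ a b : V, s(a, b) ∈ FG ↔ ((a, b) ∈ Pc ∨ (b, a) ∈ Pc) := by
    intro a b
    constructor
    · intro h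
      obtain ⟨p, hp, he⟩ := Finset.mem_image.mp h
      rcases Sym2.eq_iff.mp he with ⟨h1, h2⟩ | ⟨h1, h2⟩
      · left; rw [← h1, ← h2]; exact hp
      · right; rw [← h1, ← h2]; exact hp
    · rintro (h | h)
      · exact Finset.mem_image.mpr ⟨(a, b), h, rfl⟩
      · exact Finset.mem_image.mpr ⟨(b, a), h, Sym2.eq_swap⟩
  have hdel : ∀ a b : V, (G.deleteEdges ↑FG).Adj a b ↔ (G.Adj a b ∧ (a ∈ B ↔ b ∈ B)) := by
    intro a b
    rw [SimpleGraph.deleteEdges_adj]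
    constructor
    · rintro ⟨hab, hnm⟩
      refine ⟨hab, ?_⟩
      by_contra hiff
      have : (a, b) ∈ Pc ∨ (b, a) ∈ Pc := by
        rcases Classical.em (a ∈ B) with ha | ha
        · have hb : b ∉ B := fun hb => hiff ⟨fun _ => hb, fun _ => ha⟩
          exact hcover a b hab ha hb
        · have hb : b ∈ B := by
            by_contra hb
            exact hiff ⟨fun h => absurd h ha, fun h => absurd h hb⟩
          rcases hcover b a hab.symm hb ha with h | h
          · exact Or.inr h
          · exact Or.inl h
      exact hnm (Finset.mem_coe.mpr ((hmemFG a b).mpr this))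
    · rintro ⟨hab, hiff⟩
      refine ⟨hab, fun hm => ?_⟩
      rcases (hmemFG a b).mp (Finset.mem_coe.mp hm) with h | h
      · have := hPc _ h
        exact this.2 hiff
      · have := hPc _ h
        exact this.2 hiff.symm
  have hcut : IsRestrictedEdgeCut G ↑FG := by
    refine ⟨?_, ?_, ?_⟩
    · intro e he
      obtain ⟨p, hp, hpe⟩ := Finset.mem_image.mp he
      rw [← hpe]
      exact (hPc p hp).1
    · intro hconn
      obtain ⟨b₀, hb₀⟩ := hBne
      obtain ⟨c₀, hc₀⟩ := hBcne
      have : c₀ ∈ B := by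
        refine reach_closed _ B ?_ (hconn b₀ c₀) hb₀
        intro a ha b hab
        exact ((hdel a b).mp hab).2.mp ha
      exact hc₀ this
    · intro c
      obtain ⟨v, hv⟩ := c.exists_rep
      rcases Classical.em (v ∈ B) with hvB | hvB
      · obtain ⟨w, hw, hvw⟩ := hBnb v hvB
        have hadj : (G.deleteEdges ↑FG).Adj v w := (hdel v w).mpr ⟨hvw, by tauto⟩
        have hv' : (G.deleteEdges ↑FG).connectedComponentMk v = c := hv
        refine ⟨v, ?_, w, ?_, hadj.ne⟩
        · rw [ConnectedComponent.mem_supp_iff, hv']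
        · rw [ConnectedComponent.mem_supp_iff, ← hv', ConnectedComponent.eq]
          exact hadj.symm.reachable
      · obtain ⟨w, hw, hvw⟩ := hBcnb v hvB
        have hadj : (G.deleteEdges ↑FG).Adj v w := (hdel v w).mpr ⟨hvw, by tauto⟩
        have hv' : (G.deleteEdges ↑FG).connectedComponentMk v = c := hv
        refine ⟨v, ?_, w, ?_, hadj.ne⟩
        · rw [ConnectedComponent.mem_supp_iff, hv']
        · rw [ConnectedComponent.mem_supp_iff, ← hv', ConnectedComponent.eq]
          exact hadj.symm.reachable
  have hle : restrictedEdgeConn G ≤ (FG.card : ℕ∞) := sInf_le ⟨FG, hcut, rfl⟩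
  rw [hopt, hcardFG] at hle
  exact_mod_cast hle

end gside
section keysec
attribute [local instance] Classical.propDecidable
set_option linter.unusedSectionVars false
variable {V : Type*} [Fintype V] {n : ℕ}

/-- the weight of the edge cut determined by a "layer type" function `x`. -/
noncomputable def Wsum (G : SimpleGraph V) (n : ℕ) (x : V → ℕ) : ℕ :=
  ∑ p : V × V, if G.Adj p.1 p.2 then x p.1 * (n - x p.2) else 0

lemma Wsum_flip (G : SimpleGraph V) (x : V → ℕ) (hxle : ∀ u, x u ≤ n) :
    Wsum G n (fun u => n - x u) = Wsum G n x := by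
  unfold Wsum
  calc ∑ p : V × V, (if G.Adj p.1 p.2 then (n - x p.1) * (n - (n - x p.2)) else 0)
      = ∑ p : V × V, (if G.Adj p.1 p.2 then x p.2 * (n - x p.1) else 0) := by
        refine Finset.sum_congr rfl fun p _ => ?_
        rw [Nat.sub_sub_self (hxle _), Nat.mul_comm]
    _ = ∑ p : V × V, (if G.Adj p.2 p.1 then x p.1 * (n - x p.2) else 0) :=
        Fintype.sum_equiv (Equiv.prodComm V V) _ _ (fun p => rfl)
    _ = ∑ p : V × V, (if G.Adj p.1 p.2 then x p.1 * (n - x p.2) else 0) := by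
        refine Finset.sum_congr rfl fun p _ => ?_
        rw [SimpleGraph.adj_comm]

lemma key_case1 (G : SimpleGraph V) (hn : 3 ≤ n)
    (hopt : restrictedEdgeConn G = (minEdgeDegree G : ℕ∞))
    (hxi : 1 ≤ minEdgeDegree G)
    (x : V → ℕ) (hxle : ∀ u, x u ≤ n)
    (ha : ∀ u, 1 ≤ x u → ∃ w, G.Adj u w ∧ 1 ≤ x w)
    (hb : ∀ u, x u ≤ n - 1 → ∃ w, G.Adj u w ∧ x w ≤ n - 1)
    (hx1 : ∃ u, 1 ≤ x u) (hx2 : ∃ u, x u ≤ n - 1)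
    (hS : ∀ u, x u = 0 ∨ x u = n)
    (hW : Wsum G n x ≤ n * (minEdgeDegree G + 2) - 2) : False := by
  classical
  set A : Set V := {u | x u = n} with hA
  set Pc : Finset (V × V) :=
    Finset.univ.filter (fun p => G.Adj p.1 p.2 ∧ x p.1 = n ∧ x p.2 = 0) with hPcdef
  have hxiPc : minEdgeDegree G ≤ Pc.card := by
    refine cutbound G hopt A Pc ?_ ?_ ?_ ?_ ?_ ?_ ?_
    · obtain ⟨u, hu⟩ := hx1
      refine ⟨u, show x u = n from ?_⟩
      rcases hS u with h' | h' <;> omega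
    · obtain ⟨u, hu⟩ := hx2
      refine ⟨u, fun hmem => ?_⟩
      have h' : x u = n := hmem
      omega
    · intro v hv
      obtain ⟨w, hw, hw1⟩ := ha v (by simp only [hA, Set.mem_setOf_eq] at hv; omega)
      refine ⟨w, ?_, hw⟩
      rcases hS w with h | h
      · omega
      · exact h
    · intro v hv
      simp only [Set.mem_compl_iff, hA, Set.mem_setOf_eq] at hv
      have hv0 : x v = 0 := by rcases hS v with h | h <;> omega
      obtain ⟨w, hw, hw1⟩ := hb v (by omega)
      refine ⟨w, ?_, hw⟩
      simp only [Set.mem_compl_iff, hA, Set.mem_setOf_eq]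
      rcases hS w with h | h <;> omega
    · intro p hp
      simp only [hPcdef, Finset.mem_filter] at hp
      refine ⟨hp.2.1, ?_⟩
      simp only [hA, Set.mem_setOf_eq]
      omega
    · intro u w huw hu hwn
      left
      simp only [hA, Set.mem_setOf_eq] at hu hwn
      simp only [hPcdef, Finset.mem_filter]
      exact ⟨Finset.mem_univ _, huw, hu, by rcases hS w with h | h <;> omega⟩
    · intro p hp hp'
      simp only [hPcdef, Finset.mem_filter] at hp hp'
      omega
  have hterm : ∀ p ∈ Pc, n * n ≤ (if G.Adj p.1 p.2 then x p.1 * (n - x p.2) else 0) := by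
    intro p hp
    simp only [hPcdef, Finset.mem_filter] at hp
    rw [if_pos hp.2.1, hp.2.2.1, hp.2.2.2, Nat.sub_zero]
  have hsum : Pc.card * (n * n) ≤ Wsum G n x := by
    calc Pc.card * (n * n) = Pc.card • (n * n) := by rw [smul_eq_mul]
      _ ≤ ∑ p ∈ Pc, (if G.Adj p.1 p.2 then x p.1 * (n - x p.2) else 0) :=
          Finset.card_nsmul_le_sum _ _ _ hterm
      _ ≤ Wsum G n x := Finset.sum_le_sum_of_subset (Finset.subset_univ _)
  -- arithmetic contradiction
  set c := Pc.card
  set k := minEdgeDegree G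
  have h1 : k * (n * n) ≤ c * (n * n) := Nat.mul_le_mul_right _ hxiPc
  have h2 : k * (n * n) = n * (n * k) := by ring
  have h3 : 3 * (n * k) ≤ n * (n * k) := Nat.mul_le_mul_right _ hn
  have h4 : n ≤ n * k := by
    calc n = n * 1 := by omega
    _ ≤ n * k := Nat.mul_le_mul_left _ hxi
  have h5 : n * (k + 2) = n * k + n * 2 := by ring
  omega

lemma mul_ge_add {a b : ℕ} (ha : 1 ≤ a) (hb : 1 ≤ b) : a + b - 1 ≤ a * b := by
  have h : a * b = a * 1 + a * (b - 1) := by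
    rw [← Nat.mul_add]; congr 1; omega
  have h2 : 1 * (b - 1) ≤ a * (b - 1) := Nat.mul_le_mul_right _ ha
  omega

lemma key_dd (G : SimpleGraph V) (hG : G.Connected) (hV : 2 ≤ Fintype.card V) (hn : 3 ≤ n)
    (x : V → ℕ) (hxle : ∀ u, x u ≤ n)
    (s h : V) (hs1 : 1 ≤ x s) (hs2 : x s ≤ n - 1) (hadj : G.Adj s h) (hxh : x h = n)
    (hAind : ∀ u w, G.Adj u w → x u = n → x w ≠ n)
    (hZind : ∀ u w, G.Adj u w → x u = 0 → x w ≠ 0)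
    (hsplit : ∀ w, G.Adj s w → x w = 0 ∨ x w = n)
    (hz : ∃ z, G.Adj s z ∧ x z = 0)
    (hW : Wsum G n x ≤ n * (minEdgeDegree G + 2) - 2) : False := by
  classical
  set ds := G.degree s with hds
  set dh := G.degree h with hdh
  set FA : Finset V := (G.neighborFinset s).filter (fun w => x w = n) with hFA
  set FZ : Finset V := (G.neighborFinset s).filter (fun w => x w = 0) with hFZ
  set Qs : Finset (V × V) := FA.image (fun a => (a, s)) ∪ FZ.image (fun z => (s, z)) with hQs
  set Qh : Finset (V × V) := ((G.neighborFinset h).erase s).image (fun w => (h, w)) with hQh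
  have hsh : s ≠ h := fun he => by rw [he, hxh] at hs2; omega
  have hdisj1 : Disjoint (FA.image (fun a => (a, s))) (FZ.image (fun z => (s, z))) := by
    rw [Finset.disjoint_left]
    rintro p hp hq
    obtain ⟨a, ha', rfl⟩ := Finset.mem_image.mp hp
    obtain ⟨z, hz', hze⟩ := Finset.mem_image.mp hq
    have : s = a := congrArg Prod.fst hze
    rw [hFA, Finset.mem_filter, SimpleGraph.mem_neighborFinset] at ha'
    exact (this ▸ ha'.1).ne rfl
  have hdisj2 : Disjoint Qs Qh := by
    rw [Finset.disjoint_left]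
    rintro p hp hq
    obtain ⟨w, hw, rfl⟩ := Finset.mem_image.mp hq
    rw [Finset.mem_erase] at hw
    rcases Finset.mem_union.mp hp with h1 | h1
    · obtain ⟨a, ha', hae⟩ := Finset.mem_image.mp h1
      exact hw.1 (congrArg Prod.snd hae).symm
    · obtain ⟨z, hz', hze⟩ := Finset.mem_image.mp h1
      exact hsh (congrArg Prod.fst hze)
  -- fibre cardinalities
  have hcardsplit : FA.card + FZ.card = ds := by
    rw [hds]
    have hun : FA ∪ FZ = G.neighborFinset s := by
      ext w
      simp only [hFA, hFZ, Finset.mem_union, Finset.mem_filter, SimpleGraph.mem_neighborFinset]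
      constructor
      · rintro (⟨h1, -⟩ | ⟨h1, -⟩) <;> exact h1
      · intro h1
        rcases hsplit w h1 with h2 | h2 <;> tauto
    have hdisj : Disjoint FA FZ := by
      rw [Finset.disjoint_left]
      intro w hw1 hw2
      rw [hFA, Finset.mem_filter] at hw1
      rw [hFZ, Finset.mem_filter] at hw2
      omega
    rw [← Finset.card_union_of_disjoint hdisj, hun]
    rfl
  have hFAne : 1 ≤ FA.card := by
    refine Finset.card_pos.mpr ⟨h, ?_⟩
    rw [hFA, Finset.mem_filter, SimpleGraph.mem_neighborFinset]
    exact ⟨hadj, hxh⟩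
  have hFZne : 1 ≤ FZ.card := by
    obtain ⟨z, hz1, hz2⟩ := hz
    refine Finset.card_pos.mpr ⟨z, ?_⟩
    rw [hFZ, Finset.mem_filter, SimpleGraph.mem_neighborFinset]
    exact ⟨hz1, hz2⟩
  -- sums
  have hsumQs : ∑ p ∈ Qs, (if G.Adj p.1 p.2 then x p.1 * (n - x p.2) else 0)
      = FA.card * (n * (n - x s)) + FZ.card * (x s * n) := by
    rw [hQs, Finset.sum_union hdisj1, Finset.sum_image ?_, Finset.sum_image ?_]
    · congr 1
      · rw [Finset.sum_congr rfl ?_, Finset.sum_const, smul_eq_mul]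
        intro a ha'
        rw [hFA, Finset.mem_filter, SimpleGraph.mem_neighborFinset] at ha'
        rw [if_pos ha'.1.symm, ha'.2]
      · rw [Finset.sum_congr rfl ?_, Finset.sum_const, smul_eq_mul]
        intro z hz'
        rw [hFZ, Finset.mem_filter, SimpleGraph.mem_neighborFinset] at hz'
        rw [if_pos hz'.1, hz'.2, Nat.sub_zero]
    · intro a _ b _ he
      simpa using he
    · intro a _ b _ he
      simpa using he
  have hsumQh : (dh - 1) * n ≤ ∑ p ∈ Qh, (if G.Adj p.1 p.2 then x p.1 * (n - x p.2) else 0) := by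
    have hcard : Qh.card = dh - 1 := by
      rw [hQh, Finset.card_image_of_injective _
          (fun a b he => (Prod.ext_iff.mp (he : ((h, a) : V × V) = (h, b))).2),
        Finset.card_erase_of_mem (by rw [SimpleGraph.mem_neighborFinset]; exact hadj.symm)]
      rfl
    calc (dh - 1) * n = Qh.card • n := by rw [hcard, smul_eq_mul]
      _ ≤ _ := by
          refine Finset.card_nsmul_le_sum _ _ _ ?_
          intro p hp
          obtain ⟨w, hw, rfl⟩ := Finset.mem_image.mp hp
          rw [Finset.mem_erase, SimpleGraph.mem_neighborFinset] at hw
          rw [if_pos hw.2, hxh]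
          have hwn : x w ≠ n := hAind h w hw.2 hxh
          have : 1 ≤ n - x w := by have := hxle w; omega
          calc n = n * 1 := by omega
            _ ≤ n * (n - x w) := Nat.mul_le_mul_left _ this
  have hWsum : FA.card * (n * (n - x s)) + FZ.card * (x s * n) + (dh - 1) * n
      ≤ Wsum G n x := by
    calc FA.card * (n * (n - x s)) + FZ.card * (x s * n) + (dh - 1) * n
        ≤ ∑ p ∈ Qs, (if G.Adj p.1 p.2 then x p.1 * (n - x p.2) else 0)
          + ∑ p ∈ Qh, (if G.Adj p.1 p.2 then x p.1 * (n - x p.2) else 0) := by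
          rw [hsumQs]; omega
      _ = ∑ p ∈ Qs ∪ Qh, (if G.Adj p.1 p.2 then x p.1 * (n - x p.2) else 0) :=
          (Finset.sum_union hdisj2).symm
      _ ≤ Wsum G n x := Finset.sum_le_sum_of_subset (Finset.subset_univ _)
  -- arithmetic
  have harith : n * (ds + n - 2) ≤ FA.card * (n * (n - x s)) + FZ.card * (x s * n) := by
    have h1 : FA.card + (n - x s) - 1 ≤ FA.card * (n - x s) :=
      mul_ge_add hFAne (by omega)
    have h2 : FZ.card + x s - 1 ≤ FZ.card * (x s) := mul_ge_add hFZne hs1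
    have h3 : ds + n - 2 ≤ FA.card * (n - x s) + FZ.card * (x s) := by
      have hxs : (n - x s) + x s = n := by omega
      omega
    calc n * (ds + n - 2) ≤ n * (FA.card * (n - x s) + FZ.card * (x s)) :=
        Nat.mul_le_mul_left _ h3
      _ = FA.card * (n * (n - x s)) + FZ.card * (x s * n) := by ring
  have hxile : minEdgeDegree G ≤ ds + dh - 2 := xi_le G hadj
  have hds1 : 1 ≤ ds := deg_pos G hadj
  have hdh1 : 1 ≤ dh := deg_pos G hadj.symm
  set k := minEdgeDegree G
  have h5 : n * (k + 2) ≤ n * (ds + dh) := Nat.mul_le_mul_left _ (by omega)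
  have h6 : n * (ds + dh) = n * ds + n * dh := by ring
  have h7 : n * (ds + n - 2) = n * ds + n * (n - 2) := by
    rw [show ds + n - 2 = ds + (n - 2) by omega, Nat.mul_add]
  have h8 : n * 1 ≤ n * (n - 2) := Nat.mul_le_mul_left _ (by omega)
  have h9 : n * dh = (dh - 1) * n + n := by
    have : dh = (dh - 1) + 1 := by omega
    calc n * dh = n * ((dh - 1) + 1) := by rw [← this]
      _ = n * (dh - 1) + n := by ring
      _ = (dh - 1) * n + n := by ring
  omega

end keysec
section case3
attribute [local instance] Classical.propDecidable
set_option linter.unusedSectionVars false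
set_option maxHeartbeats 1000000
variable {V : Type*} [Fintype V] {n : ℕ}

/-- full vertices all of whose neighbours are empty -/
def A0pred (G : SimpleGraph V) (n : ℕ) (x : V → ℕ) (v : V) : Prop :=
  x v = n ∧ ∀ y, G.Adj v y → x y = 0

/-- empty vertices with no empty or `A0` neighbour -/
def Z0pred (G : SimpleGraph V) (n : ℕ) (x : V → ℕ) (v : V) : Prop :=
  x v = 0 ∧ ∀ y, G.Adj v y → ¬(x y = 0 ∨ A0pred G n x y)

def Bset (G : SimpleGraph V) (n : ℕ) (x : V → ℕ) : Set V :=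
  {v | ¬((x v = 0 ∧ ¬ Z0pred G n x v) ∨ A0pred G n x v)}

lemma mem_Bset {G : SimpleGraph V} {x : V → ℕ} {v : V} :
    v ∈ Bset G n x ↔ ¬((x v = 0 ∧ ¬ Z0pred G n x v) ∨ A0pred G n x v) := Iff.rfl

lemma not_mem_Bset {G : SimpleGraph V} {x : V → ℕ} {v : V} :
    v ∉ Bset G n x ↔ ((x v = 0 ∧ ¬ Z0pred G n x v) ∨ A0pred G n x v) := not_not

lemma key_case3 (G : SimpleGraph V) (hG : G.Connected) (hV : 2 ≤ Fintype.card V) (hn : 3 ≤ n)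
    (hopt : restrictedEdgeConn G = (minEdgeDegree G : ℕ∞))
    (hxi : 1 ≤ minEdgeDegree G)
    (x : V → ℕ) (hxle : ∀ u, x u ≤ n)
    (ha : ∀ u, 1 ≤ x u → ∃ w, G.Adj u w ∧ 1 ≤ x w)
    (hb : ∀ u, x u ≤ n - 1 → ∃ w, G.Adj u w ∧ x w ≤ n - 1)
    (s : V) (hs1 : 1 ≤ x s) (hs2 : x s ≤ n - 1)
    (hind : ∀ u w, G.Adj u w → 1 ≤ x u → x u ≤ n - 1 → ¬(1 ≤ x w ∧ x w ≤ n - 1))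
    (hnd : ∃ v, v ∉ Bset G n x)
    (hW : Wsum G n x ≤ n * (minEdgeDegree G + 2) - 2) : False := by
  classical
  -- every split vertex has full and empty neighbours
  have hSA : ∀ u, 1 ≤ x u → x u ≤ n - 1 → ∃ w, G.Adj u w ∧ x w = n := by
    intro u h1 h2
    obtain ⟨w, hw, hw1⟩ := ha u h1
    refine ⟨w, hw, ?_⟩
    have := hind u w hw h1 h2
    have := hxle w
    omega
  have hSZ : ∀ u, 1 ≤ x u → x u ≤ n - 1 → ∃ w, G.Adj u w ∧ x w = 0 := by
    intro u h1 h2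
    obtain ⟨w, hw, hw1⟩ := hb u (by omega)
    refine ⟨w, hw, ?_⟩
    have := hind u w hw h1 h2
    omega
  -- split vertices are in B
  have hfracB : ∀ u, 1 ≤ x u → x u ≤ n - 1 → u ∈ Bset G n x := by
    intro u h1 h2
    rw [mem_Bset]
    rintro (⟨h3, -⟩ | ⟨h3, -⟩) <;> omega
  -- full neighbours of vertices with positive weight are in B
  have hfullB : ∀ u w, G.Adj u w → 1 ≤ x u → x w = n → w ∈ Bset G n x := by
    intro u w huw h1 h2
    rw [mem_Bset]
    rintro (⟨h3, -⟩ | ⟨-, h4⟩)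
    · omega
    · have := h4 u huw.symm
      omega
  have hsB : s ∈ Bset G n x := hfracB s hs1 hs2
  -- the oriented cut pair finset
  set Pc : Finset (V × V) := Finset.univ.filter
    (fun p => G.Adj p.1 p.2 ∧ ¬(p.1 ∈ Bset G n x ↔ p.2 ∈ Bset G n x) ∧ x p.2 < x p.1)
    with hPcdef
  have hmemPc : ∀ u w : V, (u, w) ∈ Pc ↔
      (G.Adj u w ∧ ¬(u ∈ Bset G n x ↔ w ∈ Bset G n x) ∧ x w < x u) := by
    intro u w
    rw [hPcdef, Finset.mem_filter]
    exact ⟨fun h => h.2, fun h => ⟨Finset.mem_univ _, h⟩⟩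
  -- crossing edges have distinct x-values
  have hcross : ∀ u w, G.Adj u w → u ∈ Bset G n x → w ∉ Bset G n x → x u ≠ x w := by
    intro u w huw hu hw
    rcases not_mem_Bset.mp hw with ⟨hw0, hwz⟩ | ⟨hwn, hwy⟩
    · intro he
      have hu0 : x u = 0 := by omega
      have hZu : Z0pred G n x u := by
        have h1 := (not_or.mp (mem_Bset.mp hu)).1
        exact not_not.mp (not_and.mp h1 hu0)
      exact (hZu.2 w huw) (Or.inl hw0)
    · have := hwy u huw.symm
      omega
  have hxiPc : minEdgeDegree G ≤ Pc.card := by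
    refine cutbound G hopt (Bset G n x) Pc ⟨s, hsB⟩ ?_ ?_ ?_ ?_ ?_ ?_
    · obtain ⟨v, hv⟩ := hnd
      exact ⟨v, hv⟩
    · -- every vertex of B has a neighbour in B
      intro v hv
      rcases Nat.lt_or_ge (x v) 1 with h0 | h1
      · -- x v = 0 and v ∈ B, so Z0 v
        have hv0 : x v = 0 := by omega
        have hZv : Z0pred G n x v := by
          have h1 := (not_or.mp (mem_Bset.mp hv)).1
          exact not_not.mp (not_and.mp h1 hv0)
        obtain ⟨y, hy⟩ := exists_adj_self G hG hV v
        have h2 := hZv.2 y hy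
        push_neg at h2
        obtain ⟨hy0, hyA⟩ := h2
        rcases Nat.lt_or_ge (x y) n with hyn | hyn
        · exact ⟨y, hfracB y (by omega) (by omega), hy⟩
        · have hyn' : x y = n := by have := hxle y; omega
          refine ⟨y, ?_, hy⟩
          rw [mem_Bset]
          rintro (⟨h3, -⟩ | h3)
          · omega
          · exact hyA h3
      rcases Nat.lt_or_ge (x v) n with hvn | hvn
      · -- split vertex
        obtain ⟨w, hw, hwn⟩ := hSA v h1 (by omega)
        exact ⟨w, hfullB v w hw h1 hwn, hw⟩
      · -- x v = n and v ∈ B, so ¬ A0 v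
        have hvn' : x v = n := by have := hxle v; omega
        have hnA : ¬ A0pred G n x v := (not_or.mp (mem_Bset.mp hv)).2
        rw [A0pred] at hnA
        push_neg at hnA
        obtain ⟨y, hy, hy0⟩ := hnA hvn'
        rcases Nat.lt_or_ge (x y) n with hyn | hyn
        · exact ⟨y, hfracB y (by omega) (by omega), hy⟩
        · have hyn' : x y = n := by have := hxle y; omega
          refine ⟨y, ?_, hy⟩
          rw [mem_Bset]
          rintro (⟨h3, -⟩ | ⟨-, h4⟩)
          · omega
          · have := h4 v hy.symm
            omega
    · -- every vertex outside B has a neighbour outside B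
      intro v hv
      rw [Set.mem_compl_iff, not_mem_Bset] at hv
      rcases hv with ⟨hv0, hvz⟩ | ⟨hvn, hvy⟩
      · rw [Z0pred] at hvz
        push_neg at hvz
        obtain ⟨y, hy, hy'⟩ := hvz hv0
        refine ⟨y, ?_, hy⟩
        rw [Set.mem_compl_iff, not_mem_Bset]
        rcases hy' with hy0 | hyA
        · left
          refine ⟨hy0, fun hZy => ?_⟩
          exact hZy.2 v hy.symm (Or.inl hv0)
        · right; exact hyA
      · obtain ⟨y, hy⟩ := exists_adj_self G hG hV v
        have hy0 : x y = 0 := hvy y hy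
        refine ⟨y, ?_, hy⟩
        rw [Set.mem_compl_iff, not_mem_Bset]
        left
        refine ⟨hy0, fun hZy => ?_⟩
        exact hZy.2 v hy.symm (Or.inr ⟨hvn, hvy⟩)
    · intro p hp
      rw [hPcdef, Finset.mem_filter] at hp
      exact ⟨hp.2.1, hp.2.2.1⟩
    · intro u w huw hu hw
      have hne := hcross u w huw hu hw
      have hiff : ¬(u ∈ Bset G n x ↔ w ∈ Bset G n x) := by tauto
      rcases Nat.lt_or_ge (x w) (x u) with h | h
      · left
        rw [hmemPc]
        exact ⟨huw, hiff, h⟩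
      · right
        rw [hmemPc]
        exact ⟨huw.symm, by tauto, by omega⟩
    · rintro ⟨u, w⟩ hp hq
      rw [hmemPc] at hp hq
      have h1 : x w < x u := hp.2.2
      have h2 : x u < x w := hq.2.2
      omega
  -- each oriented cut pair contributes at least n
  have hterm : ∀ p ∈ Pc, n ≤ (if G.Adj p.1 p.2 then x p.1 * (n - x p.2) else 0) := by
    intro p hp
    rw [hPcdef, Finset.mem_filter] at hp
    obtain ⟨-, hadj, hiff, hlt⟩ := hp
    rw [if_pos hadj]
    have hkey : x p.1 = n ∨ x p.2 = 0 := by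
      rcases Classical.em (p.1 ∈ Bset G n x) with h1 | h1
      · have h2 : p.2 ∉ Bset G n x := by tauto
        rcases not_mem_Bset.mp h2 with ⟨h3, -⟩ | ⟨h3, -⟩
        · right; exact h3
        · exfalso; have := hxle p.1; omega
      · rcases not_mem_Bset.mp h1 with ⟨h3, -⟩ | ⟨h3, -⟩
        · omega
        · left; exact h3
    rcases hkey with h' | h'
    · rw [h']
      have h2 : 1 ≤ n - x p.2 := by omega
      calc n = n * 1 := by omega
        _ ≤ n * (n - x p.2) := Nat.mul_le_mul_left _ h2
    · rw [h', Nat.sub_zero]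
      have h2 : 1 ≤ x p.1 := by omega
      calc n = 1 * n := by omega
        _ ≤ x p.1 * n := Nat.mul_le_mul_right _ h2
  -- the two special pairs
  obtain ⟨a, hsa, han⟩ := hSA s hs1 hs2
  obtain ⟨z, hsz, hz0⟩ := hSZ s hs1 hs2
  have haB : a ∈ Bset G n x := hfullB s a hsa hs1 han
  have he1 : ((a, s) : V × V) ∉ Pc := by
    rw [hmemPc]
    rintro ⟨-, hiff, -⟩
    exact hiff ⟨fun _ => hsB, fun _ => haB⟩
  have hterm1 : (if G.Adj a s then x a * (n - x s) else 0) = n * (n - x s) := by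
    rw [if_pos hsa.symm, han]
  have hterm2 : (if G.Adj s z then x s * (n - x z) else 0) = x s * n := by
    rw [if_pos hsz, hz0, Nat.sub_zero]
  have hnn : n * (n - x s) + x s * n = n * n := by
    have h1 : x s * n = n * x s := Nat.mul_comm _ _
    have h2 : n * (n - x s) + n * x s = n * n := by
      rw [← Nat.mul_add]; congr 1; omega
    omega
  -- main lower bound on Wsum
  have hmain : n * n + (Pc.card - 1) * n ≤ Wsum G n x := by
    rcases Classical.em (z ∈ Bset G n x) with hzB | hzB
    · -- (s,z) is not a cut pair: add both special pairs
      have he2 : ((s, z) : V × V) ∉ Pc := by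
        rw [hmemPc]
        rintro ⟨-, hiff, -⟩
        exact hiff ⟨fun _ => hzB, fun _ => hsB⟩
      have hne12 : ((a, s) : V × V) ≠ (s, z) := by
        intro he
        have h1 : a = s := (Prod.ext_iff.mp he).1
        exact hsa.ne' (h1 ▸ rfl)
      have hsum2 : n * n + Pc.card * n ≤
          ∑ p ∈ insert ((a, s) : V × V) (insert ((s, z) : V × V) Pc),
            (if G.Adj p.1 p.2 then x p.1 * (n - x p.2) else 0) := by
        rw [Finset.sum_insert (by simp [he1, hne12]), Finset.sum_insert he2]
        have hPsum : Pc.card * n ≤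
            ∑ p ∈ Pc, (if G.Adj p.1 p.2 then x p.1 * (n - x p.2) else 0) := by
          calc Pc.card * n = Pc.card • n := by rw [smul_eq_mul]
            _ ≤ _ := Finset.card_nsmul_le_sum _ _ _ hterm
        rw [hterm1, hterm2]
        omega
      calc n * n + (Pc.card - 1) * n ≤ n * n + Pc.card * n := by
            have := Nat.mul_le_mul_right n (show Pc.card - 1 ≤ Pc.card by omega)
            omega
        _ ≤ _ := hsum2
        _ ≤ Wsum G n x := Finset.sum_le_sum_of_subset (Finset.subset_univ _)
    · -- (s,z) is a cut pair
      have he2 : ((s, z) : V × V) ∈ Pc := by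
        rw [hmemPc]
        refine ⟨hsz, by tauto, by omega⟩
      have hsum2 : x s * n + (Pc.card - 1) * n ≤
          ∑ p ∈ Pc, (if G.Adj p.1 p.2 then x p.1 * (n - x p.2) else 0) := by
        rw [← Finset.add_sum_erase _ _ he2, hterm2]
        have h3 : (Pc.card - 1) * n ≤ ∑ p ∈ Pc.erase (s, z),
            (if G.Adj p.1 p.2 then x p.1 * (n - x p.2) else 0) := by
          calc (Pc.card - 1) * n = (Pc.erase (s, z)).card • n := by
                rw [Finset.card_erase_of_mem he2, smul_eq_mul]
            _ ≤ _ := Finset.card_nsmul_le_sum _ _ _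
                (fun p hp => hterm p (Finset.mem_of_mem_erase hp))
        omega
      have hsum3 : n * (n - x s) + (x s * n + (Pc.card - 1) * n) ≤
          ∑ p ∈ insert ((a, s) : V × V) Pc,
            (if G.Adj p.1 p.2 then x p.1 * (n - x p.2) else 0) := by
        rw [Finset.sum_insert he1, hterm1]
        omega
      calc n * n + (Pc.card - 1) * n
          = n * (n - x s) + (x s * n + (Pc.card - 1) * n) := by omega
        _ ≤ _ := hsum3
        _ ≤ Wsum G n x := Finset.sum_le_sum_of_subset (Finset.subset_univ _)
  -- final contradiction
  have h1 : n * (minEdgeDegree G + 2) = n * minEdgeDegree G + n * 2 := by ring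
  have h2 : (minEdgeDegree G - 1) * n ≤ (Pc.card - 1) * n :=
    Nat.mul_le_mul_right _ (by omega)
  have h3 : (minEdgeDegree G - 1) * n = minEdgeDegree G * n - n := by
    rw [Nat.sub_mul, Nat.one_mul]
  have h4 : minEdgeDegree G * n = n * minEdgeDegree G := Nat.mul_comm _ _
  have h5 : 3 * n ≤ n * n := Nat.mul_le_mul_right _ hn
  have h6 : n ≤ n * minEdgeDegree G := by
    calc n = n * 1 := by omega
      _ ≤ n * minEdgeDegree G := Nat.mul_le_mul_left _ hxi
  omega

end case3
section case2
attribute [local instance] Classical.propDecidable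
set_option linter.unusedSectionVars false
set_option maxHeartbeats 1000000
variable {V : Type*} [Fintype V] {n : ℕ}

noncomputable def tm (G : SimpleGraph V) (n : ℕ) (x : V → ℕ) (p : V × V) : ℕ :=
  if G.Adj p.1 p.2 then x p.1 * (n - x p.2) else 0

lemma Wsum_eq_sum_tm (G : SimpleGraph V) (x : V → ℕ) :
    Wsum G n x = ∑ p : V × V, tm G n x p := rfl

lemma branch_core0 (G : SimpleGraph V) (hG : G.Connected) (hV : 2 ≤ Fintype.card V)
    (hn : 3 ≤ n) (x : V → ℕ) (g h : V) (hgh : G.Adj g h)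
    (hxg : x g = 1) (hxh : x h = 1)
    (hEg : ∀ w, G.Adj g w → w ≠ h → x w = 0)
    (hEh : ∀ w, G.Adj h w → w ≠ g → x w = 0)
    (hrest : ∀ u w, G.Adj u w → u ≠ g → u ≠ h → w ≠ g → w ≠ h →
      (x u = 0 ∧ x w = 0) ∨ (x u = n ∧ x w = n)) :
    ∀ w, w ≠ g → w ≠ h → x w = 0 := by
  intro w hwg hwh
  by_contra hw
  have hnadjg : ¬ G.Adj g w := fun hadj => hw (hEg w hadj hwh)
  have hnadjh : ¬ G.Adj h w := fun hadj => hw (hEh w hadj hwg)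
  obtain ⟨w₁, hw₁⟩ := exists_adj_self G hG hV w
  have hw₁g : w₁ ≠ g := fun he => hnadjg (he ▸ hw₁).symm
  have hw₁h : w₁ ≠ h := fun he => hnadjh (he ▸ hw₁).symm
  have hwn : x w = n := by
    rcases hrest w w₁ hw₁ hwg hwh hw₁g hw₁h with ⟨h1, -⟩ | ⟨h1, -⟩
    · exact absurd h1 hw
    · exact h1
  have hclosed : ∀ a ∈ {u | x u = n}, ∀ b, G.Adj a b → b ∈ {u | x u = n} := by
    intro a ha b hab
    have ha' : x a = n := ha
    have hag : a ≠ g := fun he => by rw [he, hxg] at ha'; omega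
    have hah : a ≠ h := fun he => by rw [he, hxh] at ha'; omega
    rcases Classical.em (b = g) with rfl | hbg
    · have := hEg a hab.symm hah
      exact absurd ha' (by omega)
    rcases Classical.em (b = h) with rfl | hbh
    · have := hEh a hab.symm hag
      exact absurd ha' (by omega)
    rcases hrest a b hab hag hah hbg hbh with ⟨h1, -⟩ | ⟨-, h2⟩
    · exact absurd ha' (by omega)
    · exact h2
  have := closed_univ G hG {u | x u = n} hclosed (p := w) hwn g
  have : x g = n := this
  omega

lemma branch_coren (G : SimpleGraph V) (hG : G.Connected) (hV : 2 ≤ Fintype.card V)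
    (hn : 3 ≤ n) (x : V → ℕ) (g h : V) (hgh : G.Adj g h)
    (hxg : x g = n - 1) (hxh : x h = n - 1)
    (hEg : ∀ w, G.Adj g w → w ≠ h → x w = n)
    (hEh : ∀ w, G.Adj h w → w ≠ g → x w = n)
    (hrest : ∀ u w, G.Adj u w → u ≠ g → u ≠ h → w ≠ g → w ≠ h →
      (x u = 0 ∧ x w = 0) ∨ (x u = n ∧ x w = n)) :
    ∀ w, w ≠ g → w ≠ h → x w = n := by
  intro w hwg hwh
  by_contra hw
  have hnadjg : ¬ G.Adj g w := fun hadj => hw (hEg w hadj hwh)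
  have hnadjh : ¬ G.Adj h w := fun hadj => hw (hEh w hadj hwg)
  obtain ⟨w₁, hw₁⟩ := exists_adj_self G hG hV w
  have hw₁g : w₁ ≠ g := fun he => hnadjg (he ▸ hw₁).symm
  have hw₁h : w₁ ≠ h := fun he => hnadjh (he ▸ hw₁).symm
  have hwn : x w = 0 := by
    rcases hrest w w₁ hw₁ hwg hwh hw₁g hw₁h with ⟨h1, -⟩ | ⟨h1, -⟩
    · exact h1
    · exact absurd h1 hw
  have hclosed : ∀ a ∈ {u | x u = 0}, ∀ b, G.Adj a b → b ∈ {u | x u = 0} := by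
    intro a ha b hab
    have ha' : x a = 0 := ha
    have hag : a ≠ g := fun he => by rw [he, hxg] at ha'; omega
    have hah : a ≠ h := fun he => by rw [he, hxh] at ha'; omega
    rcases Classical.em (b = g) with rfl | hbg
    · have := hEg a hab.symm hah
      exact absurd ha' (by omega)
    rcases Classical.em (b = h) with rfl | hbh
    · have := hEh a hab.symm hag
      exact absurd ha' (by omega)
    rcases hrest a b hab hag hah hbg hbh with ⟨-, h2⟩ | ⟨h1, -⟩
    · exact h2
    · exact absurd ha' (by omega)
  have := closed_univ G hG {u | x u = 0} hclosed (p := w) hwn g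
  have : x g = 0 := this
  omega

lemma key_case2 (G : SimpleGraph V) (hG : G.Connected) (hV : 2 ≤ Fintype.card V) (hn : 3 ≤ n)
    (x : V → ℕ) (hxle : ∀ u, x u ≤ n)
    (g h : V) (hgh : G.Adj g h)
    (hg1 : 1 ≤ x g) (hg2 : x g ≤ n - 1) (hh1 : 1 ≤ x h) (hh2 : x h ≤ n - 1)
    (hW : Wsum G n x ≤ n * (minEdgeDegree G + 2) - 2) :
    (∃ g' h', G.Adj g' h' ∧ x g' = 1 ∧ x h' = 1 ∧ ∀ w, w ≠ g' → w ≠ h' → x w = 0) ∨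
    (∃ g' h', G.Adj g' h' ∧ x g' = n - 1 ∧ x h' = n - 1 ∧
       ∀ w, w ≠ g' → w ≠ h' → x w = n) := by
  classical
  have hghne : g ≠ h := hgh.ne
  set Ngh : Finset V := (G.neighborFinset g).erase h with hNgh
  set Nhg : Finset V := (G.neighborFinset h).erase g with hNhg
  have hmemNgh : ∀ w, w ∈ Ngh ↔ (w ≠ h ∧ G.Adj g w) := by
    intro w
    rw [hNgh, Finset.mem_erase, SimpleGraph.mem_neighborFinset]
  have hmemNhg : ∀ w, w ∈ Nhg ↔ (w ≠ g ∧ G.Adj h w) := by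
    intro w
    rw [hNhg, Finset.mem_erase, SimpleGraph.mem_neighborFinset]
  have hNghcard : Ngh.card = G.degree g - 1 := by
    rw [hNgh, Finset.card_erase_of_mem (by rw [SimpleGraph.mem_neighborFinset]; exact hgh)]
    rfl
  have hNhgcard : Nhg.card = G.degree h - 1 := by
    rw [hNhg, Finset.card_erase_of_mem (by rw [SimpleGraph.mem_neighborFinset]; exact hgh.symm)]
    rfl
  set Eg : Finset (V × V) := Ngh.image (fun w => (g, w)) ∪ Ngh.image (fun w => (w, g))
    with hEgdef
  set Eh : Finset (V × V) := Nhg.image (fun w => (h, w)) ∪ Nhg.image (fun w => (w, h))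
    with hEhdef
  set P2 : Finset (V × V) := {(g, h), (h, g)} with hP2def
  -- star sums
  have hsumEg : ∑ p ∈ Eg, tm G n x p = ∑ w ∈ Ngh, fpair n (x g) (x w) := by
    have hdj : Disjoint (Ngh.image (fun w => (g, w))) (Ngh.image (fun w => (w, g))) := by
      rw [Finset.disjoint_left]
      rintro p hp hq
      obtain ⟨w, hw, rfl⟩ := Finset.mem_image.mp hp
      obtain ⟨w', hw', he⟩ := Finset.mem_image.mp hq
      have h1 : w' = g := (Prod.ext_iff.mp he).1
      have h2 := ((hmemNgh w').mp hw').2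
      rw [h1] at h2
      exact G.loopless.irrefl g h2
    have hinj1 : ∀ a ∈ Ngh, ∀ b ∈ Ngh, ((g, a) : V × V) = (g, b) → a = b :=
      fun a _ b _ he => by simpa using he
    have hinj2 : ∀ a ∈ Ngh, ∀ b ∈ Ngh, ((a, g) : V × V) = (b, g) → a = b :=
      fun a _ b _ he => by simpa using he
    rw [hEgdef, Finset.sum_union hdj, Finset.sum_image hinj1, Finset.sum_image hinj2,
      ← Finset.sum_add_distrib]
    refine Finset.sum_congr rfl fun w hw => ?_
    have hw' := (hmemNgh w).mp hw
    show tm G n x (g, w) + tm G n x (w, g) = _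
    rw [tm, tm]
    simp only
    rw [if_pos hw'.2, if_pos hw'.2.symm]
    rfl
  have hsumEh : ∑ p ∈ Eh, tm G n x p = ∑ w ∈ Nhg, fpair n (x h) (x w) := by
    have hdj : Disjoint (Nhg.image (fun w => (h, w))) (Nhg.image (fun w => (w, h))) := by
      rw [Finset.disjoint_left]
      rintro p hp hq
      obtain ⟨w, hw, rfl⟩ := Finset.mem_image.mp hp
      obtain ⟨w', hw', he⟩ := Finset.mem_image.mp hq
      have h1 : w' = h := (Prod.ext_iff.mp he).1
      have h2 := ((hmemNhg w').mp hw').2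
      rw [h1] at h2
      exact G.loopless.irrefl h h2
    have hinj1 : ∀ a ∈ Nhg, ∀ b ∈ Nhg, ((h, a) : V × V) = (h, b) → a = b :=
      fun a _ b _ he => by simpa using he
    have hinj2 : ∀ a ∈ Nhg, ∀ b ∈ Nhg, ((a, h) : V × V) = (b, h) → a = b :=
      fun a _ b _ he => by simpa using he
    rw [hEhdef, Finset.sum_union hdj, Finset.sum_image hinj1, Finset.sum_image hinj2,
      ← Finset.sum_add_distrib]
    refine Finset.sum_congr rfl fun w hw => ?_
    have hw' := (hmemNhg w).mp hw
    show tm G n x (h, w) + tm G n x (w, h) = _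
    rw [tm, tm]
    simp only
    rw [if_pos hw'.2, if_pos hw'.2.symm]
    rfl
  have hsumP2 : ∑ p ∈ P2, tm G n x p = fpair n (x g) (x h) := by
    rw [hP2def, Finset.sum_pair (by simp [hghne])]
    rw [tm, tm]
    simp only
    rw [if_pos hgh, if_pos hgh.symm]
    rfl
  -- disjointness of the groups
  have hdisjP2Eg : Disjoint P2 Eg := by
    rw [Finset.disjoint_left]
    intro p hp hq
    rw [hP2def] at hp
    simp only [Finset.mem_insert, Finset.mem_singleton] at hp
    rw [hEgdef, Finset.mem_union] at hq
    rcases hq with hq | hq <;> obtain ⟨w, hw, he⟩ := Finset.mem_image.mp hq <;>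
      have hw' := (hmemNgh w).mp hw <;> rcases hp with rfl | rfl <;>
      injection he with h1 h2
    · exact hw'.1 h2
    · exact hghne h1
    · exact hghne h2
    · exact hw'.1 h1
  have hdisjP2Eh : Disjoint P2 Eh := by
    rw [Finset.disjoint_left]
    intro p hp hq
    rw [hP2def] at hp
    simp only [Finset.mem_insert, Finset.mem_singleton] at hp
    rw [hEhdef, Finset.mem_union] at hq
    rcases hq with hq | hq <;> obtain ⟨w, hw, he⟩ := Finset.mem_image.mp hq <;>
      have hw' := (hmemNhg w).mp hw <;> rcases hp with rfl | rfl <;>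
      injection he with h1 h2
    · exact hghne h1.symm
    · exact hw'.1 h2
    · exact hw'.1 h1
    · exact hghne h2.symm
  have hdisjEgEh : Disjoint Eg Eh := by
    rw [Finset.disjoint_left]
    intro p hp hq
    rw [hEgdef, Finset.mem_union] at hp
    rw [hEhdef, Finset.mem_union] at hq
    rcases hp with hp | hp <;> obtain ⟨w, hw, rfl⟩ := Finset.mem_image.mp hp <;>
      have hw1 := (hmemNgh w).mp hw <;>
      rcases hq with hq | hq <;> obtain ⟨w', hw', he⟩ := Finset.mem_image.mp hq <;>
      have hw2 := (hmemNhg w').mp hw' <;> injection he with h1 h2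
    · exact hghne h1.symm
    · exact hw1.1 h2.symm
    · exact hw2.1 h2
    · exact hghne h2.symm
  -- the union and its complement
  set U : Finset (V × V) := P2 ∪ (Eg ∪ Eh) with hUdef
  have hsumU : ∑ p ∈ U, tm G n x p =
      fpair n (x g) (x h) + (∑ w ∈ Ngh, fpair n (x g) (x w)
        + ∑ w ∈ Nhg, fpair n (x h) (x w)) := by
    rw [hUdef, Finset.sum_union (by
        rw [Finset.disjoint_union_right]; exact ⟨hdisjP2Eg, hdisjP2Eh⟩),
      Finset.sum_union hdisjEgEh, hsumP2, hsumEg, hsumEh]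
  have hsplit : ∑ p ∈ Finset.univ \ U, tm G n x p + ∑ p ∈ U, tm G n x p = Wsum G n x := by
    rw [Wsum_eq_sum_tm]
    exact Finset.sum_sdiff (Finset.subset_univ _)
  -- lower bounds
  have hfb : 2 * n - 2 ≤ fpair n (x g) (x h) := fge_2n2 hn hg1 hg2 hh1 hh2
  have hEgb : ∀ w ∈ Ngh, n ≤ fpair n (x g) (x w) :=
    fun w _ => fge_n hg1 hg2 (hxle w)
  have hEhb : ∀ w ∈ Nhg, n ≤ fpair n (x h) (x w) :=
    fun w _ => fge_n hh1 hh2 (hxle w)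
  have hsumEgb : Ngh.card * n ≤ ∑ w ∈ Ngh, fpair n (x g) (x w) := by
    calc Ngh.card * n = Ngh.card • n := by rw [smul_eq_mul]
      _ ≤ _ := Finset.card_nsmul_le_sum _ _ _ hEgb
  have hsumEhb : Nhg.card * n ≤ ∑ w ∈ Nhg, fpair n (x h) (x w) := by
    calc Nhg.card * n = Nhg.card • n := by rw [smul_eq_mul]
      _ ≤ _ := Finset.card_nsmul_le_sum _ _ _ hEhb
  -- degree arithmetic
  have hdg : 1 ≤ G.degree g := deg_pos G hgh
  have hdh : 1 ≤ G.degree h := deg_pos G hgh.symm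
  have hxile : minEdgeDegree G ≤ G.degree g + G.degree h - 2 := xi_le G hgh
  have hmul : n * (minEdgeDegree G + 2) ≤ n * (G.degree g + G.degree h) :=
    Nat.mul_le_mul_left _ (by omega)
  have hmul2 : n * (G.degree g + G.degree h) = n * G.degree g + n * G.degree h := by ring
  have hc1 : Ngh.card * n = n * G.degree g - n := by
    rw [hNghcard, Nat.sub_mul, Nat.one_mul, Nat.mul_comm]
  have hc2 : Nhg.card * n = n * G.degree h - n := by
    rw [hNhgcard, Nat.sub_mul, Nat.one_mul, Nat.mul_comm]
  have hng : n ≤ n * G.degree g := by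
    calc n = n * 1 := by omega
      _ ≤ _ := Nat.mul_le_mul_left _ hdg
  have hnh : n ≤ n * G.degree h := by
    calc n = n * 1 := by omega
      _ ≤ _ := Nat.mul_le_mul_left _ hdh
  -- all inequalities are tight
  have heq1 : fpair n (x g) (x h) = 2 * n - 2 := by omega
  have heq2 : ∑ w ∈ Ngh, fpair n (x g) (x w) = Ngh.card * n := by omega
  have heq3 : ∑ w ∈ Nhg, fpair n (x h) (x w) = Nhg.card * n := by omega
  have heqR : ∑ p ∈ Finset.univ \ U, tm G n x p = 0 := by omega
  -- pointwise equalities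
  have hEgeq : ∀ w ∈ Ngh, fpair n (x g) (x w) = n :=
    sum_all_eq hEgb (le_of_eq heq2)
  have hEheq : ∀ w ∈ Nhg, fpair n (x h) (x w) = n :=
    sum_all_eq hEhb (le_of_eq heq3)
  have hResteq : ∀ p ∈ Finset.univ \ U, tm G n x p = 0 :=
    Finset.sum_eq_zero_iff.mp heqR
  -- rest pairs
  have hrest : ∀ u w, G.Adj u w → u ≠ g → u ≠ h → w ≠ g → w ≠ h →
      (x u = 0 ∧ x w = 0) ∨ (x u = n ∧ x w = n) := by
    intro u w huw hug huh hwg hwh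
    have hmemU : ∀ a b : V, a ≠ g → a ≠ h → b ≠ g → b ≠ h → ((a, b) : V × V) ∉ U := by
      intro a b hag hah hbg hbh hmem
      rw [hUdef, Finset.mem_union, Finset.mem_union] at hmem
      rcases hmem with hmem | hmem | hmem
      · rw [hP2def] at hmem
        simp only [Finset.mem_insert, Finset.mem_singleton] at hmem
        rcases hmem with he | he <;> injection he with h1 h2
        · exact hag h1
        · exact hah h1
      · rw [hEgdef, Finset.mem_union] at hmem
        rcases hmem with hmem | hmem <;> obtain ⟨w', -, he⟩ := Finset.mem_image.mp hmem <;>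
          injection he with h1 h2
        · exact hag h1.symm
        · exact hbg h2.symm
      · rw [hEhdef, Finset.mem_union] at hmem
        rcases hmem with hmem | hmem <;> obtain ⟨w', -, he⟩ := Finset.mem_image.mp hmem <;>
          injection he with h1 h2
        · exact hah h1.symm
        · exact hbh h2.symm
    have h1 : tm G n x (u, w) = 0 := by
      refine hResteq _ (Finset.mem_sdiff.mpr ⟨Finset.mem_univ _, hmemU u w hug huh hwg hwh⟩)
    have h2 : tm G n x (w, u) = 0 := by
      refine hResteq _ (Finset.mem_sdiff.mpr ⟨Finset.mem_univ _, hmemU w u hwg hwh hug huh⟩)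
    rw [tm] at h1 h2
    simp only at h1 h2
    rw [if_pos huw] at h1
    rw [if_pos huw.symm] at h2
    exact fzero hn (hxle u) (hxle w) h1 h2
  -- conclude
  rcases feq_2n2 hn hg1 hg2 hh1 hh2 heq1 with ⟨hg', hh'⟩ | ⟨hg', hh'⟩
  · left
    refine ⟨g, h, hgh, hg', hh', ?_⟩
    refine branch_core0 G hG hV hn x g h hgh hg' hh' ?_ ?_ hrest
    · intro w hw hwh
      have := hEgeq w ((hmemNgh w).mpr ⟨hwh, hw⟩)
      rcases feq_n hn hg1 hg2 (hxle w) this with ⟨-, h2⟩ | ⟨h1, -⟩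
      · exact h2
      · omega
    · intro w hw hwg
      have := hEheq w ((hmemNhg w).mpr ⟨hwg, hw⟩)
      rcases feq_n hn hh1 hh2 (hxle w) this with ⟨-, h2⟩ | ⟨h1, -⟩
      · exact h2
      · omega
  · right
    refine ⟨g, h, hgh, hg', hh', ?_⟩
    refine branch_coren G hG hV hn x g h hgh hg' hh' ?_ ?_ hrest
    · intro w hw hwh
      have := hEgeq w ((hmemNgh w).mpr ⟨hwh, hw⟩)
      rcases feq_n hn hg1 hg2 (hxle w) this with ⟨h1, -⟩ | ⟨-, h2⟩
      · omega
      · exact h2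
    · intro w hw hwg
      have := hEheq w ((hmemNhg w).mpr ⟨hwg, hw⟩)
      rcases feq_n hn hh1 hh2 (hxle w) this with ⟨h1, -⟩ | ⟨-, h2⟩
      · omega
      · exact h2

end case2
section keymain
attribute [local instance] Classical.propDecidable
set_option linter.unusedSectionVars false
set_option maxHeartbeats 1000000
variable {V : Type*} [Fintype V] {n : ℕ}

lemma key (G : SimpleGraph V) (hG : G.Connected) (hV : 2 ≤ Fintype.card V) (hn : 3 ≤ n)
    (hopt : restrictedEdgeConn G = (minEdgeDegree G : ℕ∞))
    (x : V → ℕ) (hxle : ∀ u, x u ≤ n)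
    (ha : ∀ u, 1 ≤ x u → ∃ w, G.Adj u w ∧ 1 ≤ x w)
    (hb : ∀ u, x u ≤ n - 1 → ∃ w, G.Adj u w ∧ x w ≤ n - 1)
    (hx1 : ∃ u, 1 ≤ x u) (hx2 : ∃ u, x u ≤ n - 1)
    (hW : Wsum G n x ≤ n * (minEdgeDegree G + 2) - 2) :
    (∃ g h, G.Adj g h ∧ x g = 1 ∧ x h = 1 ∧ ∀ w, w ≠ g → w ≠ h → x w = 0) ∨
    (∃ g h, G.Adj g h ∧ x g = n - 1 ∧ x h = n - 1 ∧ ∀ w, w ≠ g → w ≠ h → x w = n) := by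
  classical
  have hxi := xi_pos G hG hV hopt
  by_cases hedge : ∃ g h, G.Adj g h ∧ (1 ≤ x g ∧ x g ≤ n - 1) ∧ (1 ≤ x h ∧ x h ≤ n - 1)
  · obtain ⟨g, h, h1, ⟨h2, h3⟩, h4, h5⟩ := hedge
    exact key_case2 G hG hV hn x hxle g h h1 h2 h3 h4 h5 hW
  push_neg at hedge
  exfalso
  by_cases hfrac : ∃ s, 1 ≤ x s ∧ x s ≤ n - 1
  · obtain ⟨s, hs1, hs2⟩ := hfrac
    have hind : ∀ u w, G.Adj u w → 1 ≤ x u → x u ≤ n - 1 → ¬(1 ≤ x w ∧ x w ≤ n - 1) := by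
      intro u w h1 h2 h3 hc
      have := hedge u w h1 ⟨h2, h3⟩ hc.1
      omega
    by_cases hnd : ∃ v, v ∉ Bset G n x
    · exact key_case3 G hG hV hn hopt hxi x hxle ha hb s hs1 hs2 hind hnd hW
    by_cases hnd' : ∃ v, v ∉ Bset G n (fun u => n - x u)
    · -- apply case 3 to the flipped weights
      have hxle' : ∀ u, n - x u ≤ n := fun u => Nat.sub_le _ _
      have ha' : ∀ u, 1 ≤ n - x u → ∃ w, G.Adj u w ∧ 1 ≤ n - x w := by
        intro u h1
        obtain ⟨w, hw1, hw2⟩ := hb u (by have := hxle u; omega)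
        exact ⟨w, hw1, by have := hxle w; omega⟩
      have hb' : ∀ u, n - x u ≤ n - 1 → ∃ w, G.Adj u w ∧ n - x w ≤ n - 1 := by
        intro u h1
        obtain ⟨w, hw1, hw2⟩ := ha u (by have := hxle u; omega)
        exact ⟨w, hw1, by have := hxle w; omega⟩
      have hind' : ∀ u w, G.Adj u w → 1 ≤ n - x u → n - x u ≤ n - 1 →
          ¬(1 ≤ n - x w ∧ n - x w ≤ n - 1) := by
        intro u w h1 h2 h3 ⟨h4, h5⟩
        have hu := hxle u
        have hw := hxle w
        exact hind u w h1 (by omega) (by omega) ⟨by omega, by omega⟩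
      have hW' : Wsum G n (fun u => n - x u) ≤ n * (minEdgeDegree G + 2) - 2 := by
        rw [Wsum_flip G x hxle]; exact hW
      exact key_case3 G hG hV hn hopt hxi (fun u => n - x u) hxle' ha' hb' s
        (show 1 ≤ n - x s by have := hxle s; omega)
        (show n - x s ≤ n - 1 by have := hxle s; omega) hind' hnd' hW'
    · -- doubly degenerate case
      push_neg at hnd hnd'
      have hZind : ∀ u w, G.Adj u w → x u = 0 → x w ≠ 0 := by
        intro u w huw hu0
        have hmem := hnd u
        rw [mem_Bset] at hmem
        have hZ : Z0pred G n x u := by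
          have h1 := (not_or.mp hmem).1
          exact not_not.mp (not_and.mp h1 hu0)
        intro hw0
        exact hZ.2 w huw (Or.inl hw0)
      have hAind : ∀ u w, G.Adj u w → x u = n → x w ≠ n := by
        intro u w huw hun
        have hmem := hnd' u
        rw [mem_Bset] at hmem
        have hu0 : n - x u = 0 := by omega
        have hZ : Z0pred G n (fun u => n - x u) u := by
          have h1 := (not_or.mp hmem).1
          exact not_not.mp (not_and.mp h1 hu0)
        intro hwn
        exact hZ.2 w huw (Or.inl (show n - x w = 0 by omega))
      have hsplit : ∀ w, G.Adj s w → x w = 0 ∨ x w = n := by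
        intro w hw
        have := hind s w hw hs1 hs2
        have := hxle w
        omega
      obtain ⟨h, hh1, hh2⟩ := ha s hs1
      have hhn : x h = n := by
        have := hind s h hh1 hs1 hs2
        have := hxle h
        omega
      obtain ⟨z, hz1, hz2⟩ := hb s (by omega)
      have hz0 : x z = 0 := by
        have := hind s z hz1 hs1 hs2
        omega
      exact key_dd G hG hV hn x hxle s h hs1 hs2 hh1 hhn hAind hZind hsplit
        ⟨z, hz1, hz0⟩ hW
  · push_neg at hfrac
    have hS : ∀ u, x u = 0 ∨ x u = n := by
      intro u
      have h1 := hfrac u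
      have := hxle u
      omega
    exact key_case1 G hn hopt hxi x hxle ha hb hx1 hx2 hS hW
end keymain
section upperbound
attribute [local instance] Classical.propDecidable
set_option linter.unusedSectionVars false
set_option maxHeartbeats 1000000
variable {V : Type*} [Fintype V] {n : ℕ}

lemma totalProd_adj (G : SimpleGraph V) (p q : V × Fin n) :
    (totalProd G n).Adj p q ↔ G.Adj p.1 q.1 := Iff.rfl

lemma totalProd_degree (G : SimpleGraph V) (p : V × Fin n) :
    (totalProd G n).degree p = G.degree p.1 * n := by
  classical
  have hset : (totalProd G n).neighborFinset p
      = (G.neighborFinset p.1) ×ˢ (Finset.univ : Finset (Fin n)) := by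
    ext q
    rw [SimpleGraph.mem_neighborFinset, Finset.mem_product, SimpleGraph.mem_neighborFinset]
    constructor
    · intro hq
      exact ⟨hq, Finset.mem_univ _⟩
    · intro hq
      exact hq.1
  rw [SimpleGraph.degree, hset, Finset.card_product, Finset.card_univ, Fintype.card_fin]
  rfl

lemma lam_le (G : SimpleGraph V) (hG : G.Connected) (hV : 2 ≤ Fintype.card V) (hn : 3 ≤ n) :
    restrictedEdgeConn (totalProd G n) ≤ ((n * (minEdgeDegree G + 2) - 2 : ℕ) : ℕ∞) := by
  classical
  obtain ⟨u₀, v₀, huv, hxid⟩ := xi_mem G hG hV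
  have hzero : (0 : ℕ) < n := by omega
  set a : V × Fin n := (u₀, ⟨0, hzero⟩) with hadef
  set b : V × Fin n := (v₀, ⟨0, hzero⟩) with hbdef
  set H := totalProd G n with hHdef
  have hab : H.Adj a b := huv
  have habne : a ≠ b := hab.ne
  set F0 : Finset (Sym2 (V × Fin n)) :=
    (H.incidenceFinset a ∪ H.incidenceFinset b).erase s(a, b) with hF0def
  have hmemF0 : ∀ e, e ∈ F0 ↔ (e ≠ s(a, b) ∧ e ∈ H.edgeSet ∧ (a ∈ e ∨ b ∈ e)) := by
    intro e
    rw [hF0def, Finset.mem_erase, Finset.mem_union, SimpleGraph.mem_incidenceFinset,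
      SimpleGraph.mem_incidenceFinset]
    unfold SimpleGraph.incidenceSet
    constructor
    · rintro ⟨h1, (⟨h2, h3⟩ | ⟨h2, h3⟩)⟩ <;> exact ⟨h1, h2, by tauto⟩
    · rintro ⟨h1, h2, (h3 | h3)⟩
      · exact ⟨h1, Or.inl ⟨h2, h3⟩⟩
      · exact ⟨h1, Or.inr ⟨h2, h3⟩⟩
  -- the deleted graph adjacency characterisation
  have hdel : ∀ p q, (H.deleteEdges ↑F0).Adj p q ↔
      (H.Adj p q ∧ (s(p, q) = s(a, b) ∨ (a ∉ s(p, q) ∧ b ∉ s(p, q)))) := by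
    intro p q
    rw [SimpleGraph.deleteEdges_adj]
    constructor
    · rintro ⟨h1, h2⟩
      refine ⟨h1, ?_⟩
      rw [Finset.mem_coe, hmemF0] at h2
      push_neg at h2
      rcases Classical.em (s(p, q) = s(a, b)) with h | h
      · exact Or.inl h
      · have h3 := h2 h ((H.mem_edgeSet.mpr h1))
        exact Or.inr h3
    · rintro ⟨h1, (h2 | h2)⟩
      · refine ⟨h1, fun hm => ?_⟩
        rw [Finset.mem_coe, hmemF0] at hm
        exact hm.1 h2
      · refine ⟨h1, fun hm => ?_⟩
        rw [Finset.mem_coe, hmemF0] at hm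
        rcases hm.2.2 with h3 | h3
        · exact h2.1 h3
        · exact h2.2 h3
  -- every vertex has a neighbour after deletion
  have hnbr : ∀ p, ∃ q, (H.deleteEdges ↑F0).Adj p q := by
    intro p
    rcases Classical.em (p = a) with rfl | hpa
    · exact ⟨b, (hdel a b).mpr ⟨hab, Or.inl rfl⟩⟩
    rcases Classical.em (p = b) with rfl | hpb
    · exact ⟨a, (hdel b a).mpr ⟨hab.symm, Or.inl (Sym2.eq_swap)⟩⟩
    · obtain ⟨w', hw'⟩ := exists_adj_self G hG hV p.1
      set q : V × Fin n := (w', ⟨1, by omega⟩) with hqdef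
      have hqa : q ≠ a := by
        intro he
        have := congrArg (fun r => (r.2 : Fin n).val) he
        simp [hqdef, hadef] at this
      have hqb : q ≠ b := by
        intro he
        have := congrArg (fun r => (r.2 : Fin n).val) he
        simp [hqdef, hbdef] at this
      refine ⟨q, (hdel p q).mpr ⟨hw', Or.inr ⟨?_, ?_⟩⟩⟩
      · rw [Sym2.mem_iff]
        rintro (h | h)
        · exact hpa h.symm
        · exact hqa h.symm
      · rw [Sym2.mem_iff]
        rintro (h | h)
        · exact hpb h.symm
        · exact hqb h.symm
  -- {a, b} is closed under the deleted adjacency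
  have hclosed : ∀ p ∈ ({a, b} : Set (V × Fin n)), ∀ q,
      (H.deleteEdges ↑F0).Adj p q → q ∈ ({a, b} : Set (V × Fin n)) := by
    intro p hp q hadj
    rw [hdel] at hadj
    rcases hadj.2 with h | h
    · rcases Sym2.eq_iff.mp h with ⟨-, h2⟩ | ⟨-, h2⟩
      · exact Or.inr h2
      · exact Or.inl h2
    · exfalso
      rcases hp with rfl | rfl
      · exact h.1 (Sym2.mem_mk_left _ _)
      · exact h.2 (Sym2.mem_mk_left _ _)
  have hcut : IsRestrictedEdgeCut H ↑F0 := by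
    refine ⟨?_, ?_, ?_⟩
    · intro e he
      rw [Finset.mem_coe, hmemF0] at he
      exact he.2.1
    · intro hconn
      set c : V × Fin n := (u₀, ⟨1, by omega⟩) with hcdef
      have hca : c ∈ ({a, b} : Set (V × Fin n)) :=
        reach_closed _ _ hclosed (hconn a c) (Or.inl rfl)
      rcases hca with h | h <;>
        · have := congrArg (fun r => (r.2 : Fin n).val) h
          simp [hcdef, hadef, hbdef] at this
    · intro comp
      obtain ⟨v, hv⟩ := comp.exists_rep
      have hv' : (H.deleteEdges ↑F0).connectedComponentMk v = comp := hv
      obtain ⟨q, hq⟩ := hnbr v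
      refine ⟨v, ?_, q, ?_, hq.ne⟩
      · rw [SimpleGraph.ConnectedComponent.mem_supp_iff, hv']
      · rw [SimpleGraph.ConnectedComponent.mem_supp_iff, ← hv',
          SimpleGraph.ConnectedComponent.eq]
        exact hq.symm.reachable
  -- compute the cardinality
  have hcard : F0.card = n * (minEdgeDegree G + 2) - 2 := by
    have hinter : H.incidenceFinset a ∩ H.incidenceFinset b = {s(a, b)} := by
      ext e
      rw [Finset.mem_inter, SimpleGraph.mem_incidenceFinset, SimpleGraph.mem_incidenceFinset,
        Finset.mem_singleton]
      unfold SimpleGraph.incidenceSet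
      constructor
      · rintro ⟨⟨h1, h2⟩, ⟨-, h4⟩⟩
        exact ((Sym2.mem_and_mem_iff habne).mp ⟨h2, h4⟩)
      · rintro rfl
        have he : s(a, b) ∈ H.edgeSet := (H.mem_edgeSet.mpr hab)
        exact ⟨⟨he, Sym2.mem_mk_left _ _⟩, ⟨he, Sym2.mem_mk_right _ _⟩⟩
    have hmemu : s(a, b) ∈ H.incidenceFinset a ∪ H.incidenceFinset b := by
      rw [Finset.mem_union, SimpleGraph.mem_incidenceFinset]
      exact Or.inl ⟨(H.mem_edgeSet.mpr hab), Sym2.mem_mk_left _ _⟩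
    have hcard1 : (H.incidenceFinset a ∪ H.incidenceFinset b).card
        = H.degree a + H.degree b - 1 := by
      have := Finset.card_union_add_card_inter (H.incidenceFinset a) (H.incidenceFinset b)
      rw [hinter, Finset.card_singleton, SimpleGraph.card_incidenceFinset_eq_degree,
        SimpleGraph.card_incidenceFinset_eq_degree] at this
      omega
    rw [hF0def, Finset.card_erase_of_mem hmemu, hcard1]
    have hda : H.degree a = G.degree u₀ * n := totalProd_degree G a
    have hdb : H.degree b = G.degree v₀ * n := totalProd_degree G b
    have h1 : 1 ≤ G.degree u₀ := deg_pos G huv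
    have h2 : 1 ≤ G.degree v₀ := deg_pos G huv.symm
    have h3 : G.degree u₀ * n + G.degree v₀ * n = (G.degree u₀ + G.degree v₀) * n :=
      (Nat.add_mul _ _ _).symm
    have h4 : G.degree u₀ + G.degree v₀ = minEdgeDegree G + 2 := by omega
    have h5 : (minEdgeDegree G + 2) * n = n * (minEdgeDegree G + 2) := Nat.mul_comm _ _
    rw [hda, hdb, h3, h4, h5]
    omega
  have hle : restrictedEdgeConn H ≤ (F0.card : ℕ∞) := sInf_le ⟨F0, hcut, rfl⟩
  rw [hcard] at hle
  exact hle

end upperbound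
set_option maxHeartbeats 1000000 in
theorem stmt11 {V : Type*} [Fintype V] (G : SimpleGraph V) (hG : G.Connected)
    (hV : 2 ≤ Fintype.card V) (n : ℕ) (hn : 3 ≤ n)
    (hopt : restrictedEdgeConn G = (minEdgeDegree G : ℕ∞)) :
    SuperRestrictedEdgeConnected (totalProd G n) := by
  classical
  intro F hF hmin
  set H := totalProd G n with hHdef
  obtain ⟨hsub, hdisc, hcomp⟩ := hF
  have hTle : F.card ≤ n * (minEdgeDegree G + 2) - 2 := by
    have h1 := lam_le G hG hV hn
    rw [← hmin] at h1
    exact_mod_cast h1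
  have hVne : Nonempty V := Fintype.card_pos_iff.mp (by omega)
  haveI hne : Nonempty (V × Fin n) := ⟨(hVne.some, ⟨0, by omega⟩)⟩
  have hpre : ¬ (H.deleteEdges ↑F).Preconnected := fun hp => hdisc ⟨hp⟩
  rw [SimpleGraph.Preconnected] at hpre
  push_neg at hpre
  obtain ⟨p₀, q₀, hp₀q₀⟩ := hpre
  set D := H.deleteEdges ↑F with hDdef
  set X : Set (V × Fin n) := (D.connectedComponentMk p₀).supp with hXdef
  have hmemX_iff : ∀ r : V × Fin n,
      r ∈ X ↔ D.connectedComponentMk r = D.connectedComponentMk p₀ := fun r => Iff.rfl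
  have hq₀X : q₀ ∉ X := by
    intro h
    rw [hmemX_iff, SimpleGraph.ConnectedComponent.eq] at h
    exact hp₀q₀ h.symm
  have hp₀X : p₀ ∈ X := by rw [hmemX_iff]
  -- layer counts
  set x : V → ℕ :=
    fun u => (Finset.univ.filter (fun i : Fin n => ((u, i) : V × Fin n) ∈ X)).card with hxdef
  have hxle : ∀ u, x u ≤ n := by
    intro u
    calc x u ≤ (Finset.univ : Finset (Fin n)).card :=
        Finset.card_le_card (Finset.filter_subset _ _)
      _ = n := by rw [Finset.card_univ, Fintype.card_fin]
  have hxmem : ∀ u (i : Fin n), ((u, i) : V × Fin n) ∈ X → 1 ≤ x u := by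
    intro u i h
    exact Finset.card_pos.mpr ⟨i, Finset.mem_filter.mpr ⟨Finset.mem_univ _, h⟩⟩
  have hfull : ∀ u, x u = n →
      Finset.univ.filter (fun i : Fin n => ((u, i) : V × Fin n) ∈ X) = Finset.univ := by
    intro u hu
    refine Finset.eq_univ_of_card _ ?_
    rw [Fintype.card_fin]
    exact hu
  have hxnotmem : ∀ u (i : Fin n), ((u, i) : V × Fin n) ∉ X → x u ≤ n - 1 := by
    intro u i h
    by_contra hle
    have hxu : x u = n := by have := hxle u; omega
    have hmem : i ∈ Finset.univ.filter (fun i : Fin n => ((u, i) : V × Fin n) ∈ X) := by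
      rw [hfull u hxu]; exact Finset.mem_univ i
    exact h (Finset.mem_filter.mp hmem).2
  -- neighbour properties from nontrivial components
  have ha : ∀ u, 1 ≤ x u → ∃ w, G.Adj u w ∧ 1 ≤ x w := by
    intro u h1
    obtain ⟨i, hi⟩ := Finset.card_pos.mp h1
    have hiX : ((u, i) : V × Fin n) ∈ X := (Finset.mem_filter.mp hi).2
    obtain ⟨r, hr⟩ := exists_adj_of_nontrivial (hcomp (D.connectedComponentMk (u, i)))
    have hrX : r ∈ X := by
      rw [hmemX_iff] at hiX ⊢
      rw [← hiX, SimpleGraph.ConnectedComponent.eq]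
      exact hr.symm.reachable
    have hadj : G.Adj u r.1 := (SimpleGraph.deleteEdges_adj.mp hr).1
    exact ⟨r.1, hadj, hxmem r.1 r.2 hrX⟩
  have hb : ∀ u, x u ≤ n - 1 → ∃ w, G.Adj u w ∧ x w ≤ n - 1 := by
    intro u h1
    have hex : ∃ i : Fin n, ((u, i) : V × Fin n) ∉ X := by
      by_contra hall
      push_neg at hall
      have : x u = n := by
        rw [hxdef]
        simp only
        rw [Finset.filter_true_of_mem (fun i _ => hall i), Finset.card_univ, Fintype.card_fin]
      omega
    obtain ⟨i, hi⟩ := hex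
    obtain ⟨r, hr⟩ := exists_adj_of_nontrivial (hcomp (D.connectedComponentMk (u, i)))
    have hrX : r ∉ X := by
      intro hmem
      apply hi
      rw [hmemX_iff] at hmem ⊢
      rw [← hmem, SimpleGraph.ConnectedComponent.eq]
      exact hr.reachable
    exact ⟨r.1, (SimpleGraph.deleteEdges_adj.mp hr).1, hxnotmem r.1 r.2 hrX⟩
  have hx1 : ∃ u, 1 ≤ x u := ⟨p₀.1, hxmem p₀.1 p₀.2 hp₀X⟩
  have hx2 : ∃ u, x u ≤ n - 1 := ⟨q₀.1, hxnotmem q₀.1 q₀.2 hq₀X⟩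
  -- the cut-pair count
  set P : Finset ((V × Fin n) × (V × Fin n)) := Finset.univ.filter
    (fun z => z.1 ∈ X ∧ z.2 ∉ X ∧ G.Adj z.1.1 z.2.1) with hPdef
  have hPle : P.card ≤ F.card := by
    refine Finset.card_le_card_of_injOn (fun z => s(z.1, z.2)) ?_ ?_
    · intro z hz
      rw [hPdef, Finset.mem_coe, Finset.mem_filter] at hz
      obtain ⟨-, h1, h2, h3⟩ := hz
      by_contra hnm
      have hadj : D.Adj z.1 z.2 := by
        rw [hDdef, SimpleGraph.deleteEdges_adj]
        exact ⟨h3, hnm⟩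
      apply h2
      rw [hmemX_iff] at h1 ⊢
      rw [← h1, SimpleGraph.ConnectedComponent.eq]
      exact hadj.symm.reachable
    · intro z hz z' hz' he
      simp only [hPdef, Finset.mem_coe, Finset.mem_filter] at hz hz'
      rcases Sym2.eq_iff.mp he with ⟨h1, h2⟩ | ⟨h1, h2⟩
      · exact Prod.ext h1 h2
      · exfalso
        exact hz'.2.2.1 (h1 ▸ hz.2.1)
  have hPW : P.card = Wsum G n x := by
    rw [Wsum, Finset.card_eq_sum_card_fiberwise
      (f := fun z : (V × Fin n) × (V × Fin n) => ((z.1.1, z.2.1) : V × V))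
      (t := Finset.univ) (fun z _ => Finset.mem_univ _)]
    refine Finset.sum_congr rfl fun p _ => ?_
    by_cases hA : G.Adj p.1 p.2
    · rw [if_pos hA]
      have hbij : (P.filter (fun z => ((z.1.1, z.2.1) : V × V) = p)).card =
          ((Finset.univ.filter (fun i : Fin n => ((p.1, i) : V × Fin n) ∈ X)) ×ˢ
           (Finset.univ.filter (fun j : Fin n => ((p.2, j) : V × Fin n) ∉ X))).card := by
        refine Finset.card_bij' (fun z _ => (z.1.2, z.2.2))
          (fun y _ => ((p.1, y.1), (p.2, y.2))) ?_ ?_ ?_ ?_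
        · intro z hz
          rw [Finset.mem_filter, hPdef, Finset.mem_filter] at hz
          obtain ⟨⟨-, h1, h2, -⟩, h4⟩ := hz
          have e1 : z.1.1 = p.1 := congrArg Prod.fst h4
          have e2 : z.2.1 = p.2 := congrArg Prod.snd h4
          rw [Finset.mem_product, Finset.mem_filter, Finset.mem_filter]
          constructor
          · refine ⟨Finset.mem_univ _, ?_⟩
            have : ((z.1.1, z.1.2) : V × Fin n) ∈ X := h1
            rw [e1] at this
            exact this
          · refine ⟨Finset.mem_univ _, ?_⟩
            have : ((z.2.1, z.2.2) : V × Fin n) ∉ X := h2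
            rw [e2] at this
            exact this
        · intro y hy
          rw [Finset.mem_product, Finset.mem_filter, Finset.mem_filter] at hy
          rw [Finset.mem_filter, hPdef, Finset.mem_filter]
          exact ⟨⟨Finset.mem_univ _, hy.1.2, hy.2.2, hA⟩, rfl⟩
        · rintro ⟨⟨a1, a2⟩, b1, b2⟩ hz
          rw [Finset.mem_filter] at hz
          have e1 : a1 = p.1 := congrArg Prod.fst hz.2
          have e2 : b1 = p.2 := congrArg Prod.snd hz.2
          subst e1
          subst e2
          rfl
        · intro y hy
          rfl
      rw [hbij, Finset.card_product]
      have hxp1 : (Finset.univ.filter (fun i : Fin n => ((p.1, i) : V × Fin n) ∈ X)).card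
          = x p.1 := rfl
      have hxp2 : (Finset.univ.filter (fun j : Fin n => ((p.2, j) : V × Fin n) ∈ X)).card
          = x p.2 := rfl
      have hsplit := Finset.card_filter_add_card_filter_not
        (s := (Finset.univ : Finset (Fin n)))
        (p := fun j : Fin n => ((p.2, j) : V × Fin n) ∈ X)
      rw [Finset.card_univ, Fintype.card_fin, hxp2] at hsplit
      rw [hxp1]
      have hnot : (Finset.univ.filter (fun j : Fin n => ¬ ((p.2, j) : V × Fin n) ∈ X)).card
          = n - x p.2 := by omega
      rw [hnot]
    · rw [if_neg hA]
      rw [Finset.card_eq_zero, Finset.filter_eq_empty_iff]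
      intro z hz
      rw [hPdef, Finset.mem_filter] at hz
      intro he
      have e1 : z.1.1 = p.1 := congrArg Prod.fst he
      have e2 : z.2.1 = p.2 := congrArg Prod.snd he
      exact hA (e1 ▸ e2 ▸ hz.2.2.2)
  have hW : Wsum G n x ≤ n * (minEdgeDegree G + 2) - 2 := by
    rw [← hPW]
    exact hPle.trans hTle
  -- apply the main combinatorial lemma
  rcases key G hG hV hn hopt x hxle ha hb hx1 hx2 hW with
    ⟨g, h, hgh, hxg, hxh, hall⟩ | ⟨g, h, hgh, hxg, hxh, hall⟩
  · -- X itself is a single edge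
    obtain ⟨i, hi⟩ := Finset.card_eq_one.mp hxg
    have hiX : ((g, i) : V × Fin n) ∈ X := by
      have : i ∈ Finset.univ.filter (fun i : Fin n => ((g, i) : V × Fin n) ∈ X) := by
        rw [hi]; exact Finset.mem_singleton_self i
      exact (Finset.mem_filter.mp this).2
    have hiu : ∀ i', ((g, i') : V × Fin n) ∈ X → i' = i := by
      intro i' h'
      have : i' ∈ Finset.univ.filter (fun i : Fin n => ((g, i) : V × Fin n) ∈ X) :=
        Finset.mem_filter.mpr ⟨Finset.mem_univ _, h'⟩
      rw [hi, Finset.mem_singleton] at this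
      exact this
    obtain ⟨j, hj⟩ := Finset.card_eq_one.mp hxh
    have hjX : ((h, j) : V × Fin n) ∈ X := by
      have : j ∈ Finset.univ.filter (fun i : Fin n => ((h, i) : V × Fin n) ∈ X) := by
        rw [hj]; exact Finset.mem_singleton_self j
      exact (Finset.mem_filter.mp this).2
    have hju : ∀ j', ((h, j') : V × Fin n) ∈ X → j' = j := by
      intro j' h'
      have : j' ∈ Finset.univ.filter (fun i : Fin n => ((h, i) : V × Fin n) ∈ X) :=
        Finset.mem_filter.mpr ⟨Finset.mem_univ _, h'⟩
      rw [hj, Finset.mem_singleton] at this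
      exact this
    set p : V × Fin n := (g, i) with hpd
    set q : V × Fin n := (h, j) with hqd
    have hpq : p ≠ q := fun he => hgh.ne (congrArg Prod.fst he)
    have hXsub : X ⊆ {p, q} := by
      rintro ⟨w, k⟩ hw
      rcases Classical.em (w = g) with rfl | hwg
      · left
        rw [hiu k hw]
      rcases Classical.em (w = h) with rfl | hwh
      · right
        rw [hju k hw]
        rfl
      · exfalso
        have h0 := hall w hwg hwh
        have h1 := hxmem w k hw
        omega
    have hXeq : X = {p, q} := by
      refine Set.Subset.antisymm hXsub ?_
      rintro r (rfl | rfl)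
      · exact hiX
      · exact hjX
    have hccp : D.connectedComponentMk p = D.connectedComponentMk p₀ := (hmemX_iff p).mp hiX
    have hsupp : (D.connectedComponentMk p).supp = {p, q} := by
      rw [hccp, ← hXdef, hXeq]
    have hqmem : q ∈ (D.connectedComponentMk p).supp := by
      rw [hsupp]
      right
      rfl
    have hadj : D.Adj p q := adj_of_supp_pair hqmem hsupp.subset hpq
    exact ⟨p, q, hadj, hsupp⟩
  · -- the complement of X is a single edge
    have hmiss : ∀ w : V, x w = n - 1 → ∃ i : Fin n, ((w, i) : V × Fin n) ∉ X ∧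
        ∀ i', ((w, i') : V × Fin n) ∉ X → i' = i := by
      intro w hw
      have hxw : (Finset.univ.filter (fun i : Fin n => ((w, i) : V × Fin n) ∈ X)).card
          = x w := rfl
      have hsplit := Finset.card_filter_add_card_filter_not
        (s := (Finset.univ : Finset (Fin n)))
        (p := fun i : Fin n => ((w, i) : V × Fin n) ∈ X)
      rw [Finset.card_univ, Fintype.card_fin, hxw] at hsplit
      have hone : (Finset.univ.filter (fun i : Fin n => ¬ ((w, i) : V × Fin n) ∈ X)).card = 1 := by
        omega
      obtain ⟨i, hi⟩ := Finset.card_eq_one.mp hone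
      refine ⟨i, ?_, ?_⟩
      · have : i ∈ Finset.univ.filter (fun i : Fin n => ¬ ((w, i) : V × Fin n) ∈ X) := by
          rw [hi]; exact Finset.mem_singleton_self i
        exact (Finset.mem_filter.mp this).2
      · intro i' h'
        have : i' ∈ Finset.univ.filter (fun i : Fin n => ¬ ((w, i) : V × Fin n) ∈ X) :=
          Finset.mem_filter.mpr ⟨Finset.mem_univ _, h'⟩
        rw [hi, Finset.mem_singleton] at this
        exact this
    obtain ⟨i, hip, hiu⟩ := hmiss g hxg
    obtain ⟨j, hjp, hju⟩ := hmiss h hxh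
    set p : V × Fin n := (g, i) with hpd
    set q : V × Fin n := (h, j) with hqd
    have hpq : p ≠ q := fun he => hgh.ne (congrArg Prod.fst he)
    have hccne : D.connectedComponentMk p ≠ D.connectedComponentMk p₀ :=
      fun he => hip ((hmemX_iff p).mpr he)
    have hsub : (D.connectedComponentMk p).supp ⊆ {p, q} := by
      rintro ⟨w, k⟩ hr
      rw [SimpleGraph.ConnectedComponent.mem_supp_iff] at hr
      have hrX : ((w, k) : V × Fin n) ∉ X := by
        intro hmem
        rw [hmemX_iff] at hmem
        exact hccne (hr ▸ hmem)
      rcases Classical.em (w = g) with rfl | hwg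
      · left
        rw [hiu k hrX]
      rcases Classical.em (w = h) with rfl | hwh
      · right
        rw [hju k hrX]
        rfl
      · exfalso
        have h0 := hall w hwg hwh
        have hmem : k ∈ Finset.univ.filter (fun i : Fin n => ((w, i) : V × Fin n) ∈ X) := by
          rw [hfull w h0]; exact Finset.mem_univ k
        exact hrX (Finset.mem_filter.mp hmem).2
    obtain ⟨r, hr, hrp⟩ := (hcomp (D.connectedComponentMk p)).exists_ne p
    have hrq : r = q := by
      rcases hsub hr with h' | h'
      · exact absurd h' hrp
      · exact h'
    have hqmem : q ∈ (D.connectedComponentMk p).supp := hrq ▸ hr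
    have hadj : D.Adj p q := adj_of_supp_pair hqmem hsub hpq
    have hsupp : (D.connectedComponentMk p).supp = {p, q} := by
      refine Set.Subset.antisymm hsub ?_
      rintro r' (rfl | rfl)
      · rw [SimpleGraph.ConnectedComponent.mem_supp_iff]
      · exact hqmem
    exact ⟨p, q, hadj, hsupp⟩
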